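/- arXiv:1406.0363 — 3 statements merged into one kernel-verified Lean document; each statement's English description precedes it below -/
import Mathlib

section
/- Suppose Assumption (S) holds. Then the size of the range satisfies 𝔼[|R(n)|] = (n/ℓ*(n))(1+o(1)) as n → ∞, and |R(n)| obeys the weak law of large numbers: |R(n)| / 𝔼[|R(n)|] → 1 in ℙ-probability as n → ∞. -/
open MeasureTheory ProbabilityTheory Filter Finset Topology
open scoped Classical

namespace LLNRange

variable {r ℓ : ℕ → ℝ}

structure Hyp (r ℓ : ℕ → ℝ) : Prop where
  hℓ1 : ∀ n, 1 ≤ ℓ n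
  hrℓ : ∀ n, r n = 1 / ℓ n
  hmono : ∀ ⦃m n : ℕ⦄, m ≤ n → r n ≤ r m
  hslow : ∀ c : ℝ, 0 < c → Tendsto (fun n : ℕ => ℓ ⌊c * n⌋₊ / ℓ n) atTop (𝓝 1)

namespace Hyp

noncomputable def a (r : ℕ → ℝ) (n : ℕ) : ℝ := ∑ k ∈ Finset.range n, r k

variable (h : Hyp r ℓ)
include h

lemma ℓpos (n : ℕ) : (0:ℝ) < ℓ n := lt_of_lt_of_le one_pos (h.hℓ1 n)

lemma rpos (n : ℕ) : 0 < r n := by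
  have := h.ℓpos n; rw [h.hrℓ]; positivity

lemma rle1 (n : ℕ) : r n ≤ 1 := by
  rw [h.hrℓ]; rw [div_le_one (h.ℓpos n)]; exact h.hℓ1 n

lemma ℓmono : ∀ ⦃m n : ℕ⦄, m ≤ n → ℓ m ≤ ℓ n := by
  intro m n hmn
  have h1 := h.hmono hmn
  rw [h.hrℓ, h.hrℓ] at h1
  have hm := h.ℓpos m
  have hn := h.ℓpos n
  rw [div_le_div_iff₀ hn hm] at h1
  linarith

lemma rℓ (n : ℕ) : r n * ℓ n = 1 := by
  have := h.ℓpos n; rw [h.hrℓ]; field_simp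

lemma a_nonneg (n : ℕ) : 0 ≤ a r n :=
  Finset.sum_nonneg fun k _ => (h.rpos k).le

lemma a_mono : Monotone (a r) := by
  intro m n hmn
  exact Finset.sum_le_sum_of_subset_of_nonneg (Finset.range_subset_range.2 hmn)
    (fun k _ _ => (h.rpos k).le)

lemma a_rec {m n : ℕ} (hmn : m ≤ n) : a r n ≤ a r m + ((n : ℝ) - m) * r m := by
  have hsplit : a r n = a r m + ∑ k ∈ Finset.Ico m n, r k := by
    unfold a
    simp only [Finset.range_eq_Ico]
    rw [Finset.sum_Ico_consecutive _ (Nat.zero_le m) hmn]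
  rw [hsplit]
  have hb : ∑ k ∈ Finset.Ico m n, r k ≤ ∑ _k ∈ Finset.Ico m n, r m :=
    Finset.sum_le_sum fun k hk => h.hmono (Finset.mem_Ico.1 hk).1
  have he : ∑ _k ∈ Finset.Ico m n, r m = ((n:ℝ) - m) * r m := by
    rw [Finset.sum_const, Nat.card_Ico, nsmul_eq_mul, Nat.cast_sub hmn]
  linarith

lemma a_lower (n : ℕ) : (n : ℝ) * r n ≤ a r n := by
  have h1 : ∑ _k ∈ Finset.range n, r n ≤ a r n :=
    Finset.sum_le_sum fun k hk => h.hmono (Finset.mem_range.1 hk).le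
  simpa using h1

lemma n_le_aℓ (n : ℕ) : (n : ℝ) ≤ a r n * ℓ n := by
  have h1 := h.a_lower n
  have h2 : (n:ℝ) * r n * ℓ n ≤ a r n * ℓ n :=
    mul_le_mul_of_nonneg_right h1 (h.ℓpos n).le
  calc (n:ℝ) = (n:ℝ) * (r n * ℓ n) := by rw [h.rℓ]; ring
  _ = (n:ℝ) * r n * ℓ n := by ring
  _ ≤ _ := h2

omit h in
lemma half_floor_lt (n : ℕ) (hn : 1 ≤ n) : ⌊(1/2:ℝ)*n⌋₊ < n := by
  have h0 : (0:ℝ) ≤ (1/2:ℝ)*n := by positivity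
  have h1 : (⌊(1/2:ℝ)*n⌋₊ : ℝ) ≤ (1/2:ℝ)*n := Nat.floor_le h0
  have h2 : (1/2:ℝ)*n < n := by
    have : (1:ℝ) ≤ n := by exact_mod_cast hn
    linarith
  exact_mod_cast lt_of_le_of_lt h1 h2

omit h in
lemma half_floor_ge1 (n : ℕ) (hn : 2 ≤ n) : 1 ≤ ⌊(1/2:ℝ)*n⌋₊ := by
  apply Nat.le_floor
  have : (2:ℝ) ≤ n := by exact_mod_cast hn
  push_cast
  linarith

lemma aℓ_bounded : ∃ M : ℝ, 10/3 ≤ M ∧ ∀ n : ℕ, a r n * ℓ n ≤ M * n := by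
  have hhalf : ∀ᶠ n : ℕ in atTop, ℓ n ≤ 5/4 * ℓ ⌊(1/2:ℝ)*n⌋₊ := by
    have ht := (h.hslow (1/2) (by norm_num)).eventually
      (lt_mem_nhds (show (4/5:ℝ) < 1 by norm_num))
    filter_upwards [ht] with n hn
    have hp := h.ℓpos n
    have hq := h.ℓpos (r := r) ⌊(1/2:ℝ)*n⌋₊
    rw [lt_div_iff₀ hp] at hn
    linarith
  obtain ⟨N₀, hN₀⟩ := eventually_atTop.1 hhalf
  set N₁ := max N₀ 2 with hN₁
  have hne : ((Finset.range (N₁+1)).image (fun n => a r n * ℓ n)).Nonempty := by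
    apply Finset.Nonempty.image
    exact ⟨0, Finset.mem_range.2 (Nat.succ_pos _)⟩
  set B := ((Finset.range (N₁+1)).image (fun n => a r n * ℓ n)).max' hne with hB
  refine ⟨max B (10/3), le_max_right _ _, ?_⟩
  set M := max B (10/3) with hM
  have hM103 : (10/3:ℝ) ≤ M := le_max_right _ _
  have hMB : B ≤ M := le_max_left _ _
  intro n
  induction n using Nat.strong_induction_on with
  | _ n IH =>
    rcases Nat.eq_zero_or_pos n with rfl | hn1
    · simp [a]
    by_cases hle : n ≤ N₁
    · have hmem : a r n * ℓ n ∈ (Finset.range (N₁+1)).image (fun n => a r n * ℓ n) :=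
        Finset.mem_image_of_mem _ (Finset.mem_range.2 (Nat.lt_succ_of_le hle))
      have h1 : a r n * ℓ n ≤ B := Finset.le_max' _ _ hmem
      have h2 : (1:ℝ) ≤ n := by exact_mod_cast hn1
      have h3 : (0:ℝ) ≤ M := by linarith
      calc a r n * ℓ n ≤ B := h1
      _ ≤ M := hMB
      _ = M * 1 := by ring
      _ ≤ M * n := by nlinarith
    · push_neg at hle
      have hnN₀ : N₀ ≤ n := le_trans (le_max_left _ _) hle.le
      have hn2 : 2 ≤ n := le_trans (le_max_right _ _) hle.le
      set m := ⌊(1/2:ℝ)*n⌋₊ with hm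
      have hm1 : 1 ≤ m := half_floor_ge1 n hn2
      have hmn : m < n := half_floor_lt n hn1
      have hIH : a r m * ℓ m ≤ M * m := IH m hmn
      have hℓℓ : ℓ n ≤ 5/4 * ℓ m := hN₀ n hnN₀
      have hrec := h.a_rec (r := r) hmn.le
      have hmhalf : (m:ℝ) ≤ (1/2)*n := Nat.floor_le (by positivity)
      have hrm := h.rpos m
      have hℓm := h.ℓpos (r := r) m
      have hℓn := h.ℓpos (r := r) n
      have ham := h.a_nonneg (ℓ := ℓ) m
      have hrℓm := h.rℓ m
      have hnm : (0:ℝ) ≤ (n:ℝ) - m := by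
        have : (m:ℝ) ≤ n := by exact_mod_cast hmn.le
        linarith
      have key : a r n * ℓ n ≤ (a r m + ((n:ℝ) - m) * r m) * ℓ n :=
        mul_le_mul_of_nonneg_right hrec hℓn.le
      have t1 : a r m * ℓ n ≤ 5/4 * (a r m * ℓ m) := by nlinarith
      have t15 : a r m * ℓ m ≤ M * ((1/2)*n) := by
        have : M * (m:ℝ) ≤ M * ((1/2)*n) := by
          apply mul_le_mul_of_nonneg_left hmhalf (by linarith)
        linarith
      have t2 : ((n:ℝ) - m) * r m * ℓ n ≤ 5/4 * n := by
        have e1 : ((n:ℝ) - m) * r m * ℓ n ≤ ((n:ℝ) - m) * r m * (5/4 * ℓ m) := by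
          have : (0:ℝ) ≤ ((n:ℝ) - m) * r m := by positivity
          nlinarith
        have e2 : ((n:ℝ) - m) * r m * (5/4 * ℓ m) = 5/4 * ((n:ℝ)-m) := by
          calc ((n:ℝ) - m) * r m * (5/4 * ℓ m) = 5/4 * ((n:ℝ)-m) * (r m * ℓ m) := by ring
          _ = 5/4 * ((n:ℝ)-m) := by rw [hrℓm]; ring
        have e3 : (5/4:ℝ) * ((n:ℝ)-m) ≤ 5/4 * n := by
          have : (0:ℝ) ≤ (m:ℝ) := Nat.cast_nonneg m
          linarith
        linarith
      have total : a r n * ℓ n ≤ 5/8 * (M * n) + 5/4 * n := by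
        have expand : (a r m + ((n:ℝ) - m) * r m) * ℓ n
            = a r m * ℓ n + ((n:ℝ) - m) * r m * ℓ n := by ring
        rw [expand] at key
        nlinarith
      have hMn : (0:ℝ) ≤ (n:ℝ) := Nat.cast_nonneg n
      nlinarith

set_option maxHeartbeats 1000000 in
lemma aℓ_upper : ∀ ε : ℝ, 0 < ε → ∀ᶠ n : ℕ in atTop, a r n * ℓ n ≤ (1+ε) * n := by
  intro ε hε
  obtain ⟨M, hM103, hMb⟩ := h.aℓ_bounded
  have hM0 : (0:ℝ) < M := by linarith
  set δ : ℝ := min (1/2) (ε/(4*M)) with hδd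
  have hδ0 : 0 < δ := by
    apply lt_min (by norm_num)
    positivity
  have hδh : δ ≤ 1/2 := min_le_left _ _
  have hδM : δ * M ≤ ε/4 := by
    have h1 : δ ≤ ε/(4*M) := min_le_right _ _
    rw [le_div_iff₀ (by positivity)] at h1
    nlinarith
  set η : ℝ := min (ε/4) 1 with hη
  have hη0 : 0 < η := lt_min (by positivity) one_pos
  have hη1 : η ≤ 1 := min_le_right _ _
  have hηε : η ≤ ε/4 := min_le_left _ _
  have hratio : ∀ᶠ n : ℕ in atTop, ℓ n ≤ (1 + η) * ℓ ⌊δ*n⌋₊ := by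
    have hlt : (1:ℝ)/(1 + η) < 1 := by
      rw [div_lt_one (by linarith)]
      linarith
    have ht := (h.hslow δ hδ0).eventually (lt_mem_nhds hlt)
    filter_upwards [ht] with n hn
    have hp := h.ℓpos n
    have hq := h.ℓpos (r := r) ⌊δ*n⌋₊
    rw [div_lt_div_iff₀ (by linarith) hp] at hn
    nlinarith
  have hbig : ∀ᶠ n : ℕ in atTop, (2:ℝ)/δ ≤ n :=
    tendsto_natCast_atTop_atTop.eventually_ge_atTop _
  filter_upwards [hratio, hbig] with n hrat hbign
  set m := ⌊δ*n⌋₊ with hm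
  have hn0 : (0:ℝ) < n := by
    have : (0:ℝ) < 2/δ := by positivity
    linarith
  have hmδn : (m:ℝ) ≤ δ*n := Nat.floor_le (by positivity)
  have hmn : m ≤ n := by
    have h2 : δ*(n:ℝ) ≤ n := by nlinarith
    have : (m:ℝ) ≤ (n:ℝ) := le_trans hmδn h2
    exact_mod_cast this
  have hrec := h.a_rec (r := r) hmn
  have hℓn := h.ℓpos (r := r) n
  have hℓm := h.ℓpos (r := r) m
  have ham := h.a_nonneg (ℓ := ℓ) m
  have hrm := h.rpos m
  have hrℓm := h.rℓ m
  have hnm : (0:ℝ) ≤ (n:ℝ) - m := by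
    have : (m:ℝ) ≤ (n:ℝ) := by exact_mod_cast hmn
    linarith
  have key : a r n * ℓ n ≤ a r m * ℓ n + ((n:ℝ) - m) * r m * ℓ n := by
    have h1 := mul_le_mul_of_nonneg_right hrec hℓn.le
    calc a r n * ℓ n ≤ (a r m + ((n:ℝ) - m) * r m) * ℓ n := h1
    _ = a r m * ℓ n + ((n:ℝ) - m) * r m * ℓ n := by ring
  have t1 : a r m * ℓ n ≤ (1+η) * (M * (δ*n)) := by
    have e1 : a r m * ℓ n ≤ a r m * ((1+η) * ℓ m) :=
      mul_le_mul_of_nonneg_left hrat ham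
    have e2 : a r m * ℓ m ≤ M * m := hMb m
    have e3 : M * (m:ℝ) ≤ M * (δ*n) := mul_le_mul_of_nonneg_left hmδn hM0.le
    have e4 : a r m * ((1+η) * ℓ m) = (1+η) * (a r m * ℓ m) := by ring
    rw [e4] at e1
    have e5 : (1+η) * (a r m * ℓ m) ≤ (1+η) * (M * (δ*n)) := by
      apply mul_le_mul_of_nonneg_left (le_trans e2 e3) (by linarith)
    linarith
  have t2 : ((n:ℝ) - m) * r m * ℓ n ≤ (1+η) * n := by
    have e1 : ((n:ℝ) - m) * r m * ℓ n ≤ ((n:ℝ) - m) * r m * ((1+η) * ℓ m) := by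
      apply mul_le_mul_of_nonneg_left hrat
      positivity
    have e2 : ((n:ℝ) - m) * r m * ((1+η) * ℓ m) = (1+η) * ((n:ℝ)-m) * (r m * ℓ m) := by
      ring
    rw [e2, hrℓm, mul_one] at e1
    have e3 : (1+η) * ((n:ℝ)-m) ≤ (1+η) * n := by
      apply mul_le_mul_of_nonneg_left _ (by linarith)
      have : (0:ℝ) ≤ (m:ℝ) := Nat.cast_nonneg m
      linarith
    linarith
  have hδMn : (1+η) * (M * (δ*n)) ≤ (ε/2) * n := by
    have e1 : (1+η) * (M * (δ*n)) = (1+η) * (δ*M) * n := by ring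
    rw [e1]
    apply mul_le_mul_of_nonneg_right _ hn0.le
    nlinarith
  calc a r n * ℓ n ≤ (1+η) * (M * (δ*n)) + (1+η) * n := by linarith
  _ ≤ (ε/2)*n + (1 + ε/4) * n := by nlinarith
  _ ≤ (1+ε) * n := by nlinarith

lemma tendsto_aℓ_div : Tendsto (fun n : ℕ => a r n * ℓ n / n) atTop (𝓝 1) := by
  rw [Metric.tendsto_atTop]
  intro ε hε
  obtain ⟨N, hN⟩ := eventually_atTop.1 (h.aℓ_upper (ε/2) (by linarith))
  refine ⟨max N 1, fun n hn => ?_⟩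
  have hnN : N ≤ n := le_trans (le_max_left _ _) hn
  have hn1 : 1 ≤ n := le_trans (le_max_right _ _) hn
  have hn0 : (0:ℝ) < n := by exact_mod_cast hn1
  have hup : a r n * ℓ n / n ≤ 1 + ε/2 := by
    rw [div_le_iff₀ hn0]
    have := hN n hnN
    linarith
  have hlo : 1 ≤ a r n * ℓ n / n := by
    rw [le_div_iff₀ hn0]
    have := h.n_le_aℓ n
    linarith
  rw [Real.dist_eq]
  rw [abs_sub_lt_iff]
  constructor <;> linarith

lemma ℓ_sqrt : ∃ C : ℝ, 1 ≤ C ∧ ∀ n : ℕ, 1 ≤ n → ℓ n ≤ C * Real.sqrt n := by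
  have hhalf : ∀ᶠ n : ℕ in atTop, ℓ n ≤ 5/4 * ℓ ⌊(1/2:ℝ)*n⌋₊ := by
    have ht := (h.hslow (1/2) (by norm_num)).eventually
      (lt_mem_nhds (show (4/5:ℝ) < 1 by norm_num))
    filter_upwards [ht] with n hn
    have hp := h.ℓpos n
    have hq := h.ℓpos (r := r) ⌊(1/2:ℝ)*n⌋₊
    rw [lt_div_iff₀ hp] at hn
    linarith
  obtain ⟨N₀, hN₀⟩ := eventually_atTop.1 hhalf
  set N₁ := max N₀ 2 with hN₁
  have hne0 : (Finset.range (N₁+1)).Nonempty := ⟨0, Finset.mem_range.2 (Nat.succ_pos _)⟩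
  have hne : ((Finset.range (N₁+1)).image ℓ).Nonempty := hne0.image ℓ
  set B := ((Finset.range (N₁+1)).image ℓ).max' hne with hB
  refine ⟨max B 1, le_max_right _ _, ?_⟩
  set C := max B 1 with hC
  have hC1 : (1:ℝ) ≤ C := le_max_right _ _
  have hCB : B ≤ C := le_max_left _ _
  intro n
  induction n using Nat.strong_induction_on with
  | _ n IH =>
    intro hn1
    by_cases hle : n ≤ N₁
    · have hmem : ℓ n ∈ (Finset.range (N₁+1)).image ℓ :=
        Finset.mem_image_of_mem _ (Finset.mem_range.2 (Nat.lt_succ_of_le hle))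
      have h1 : ℓ n ≤ B := Finset.le_max' _ _ hmem
      have h2 : (1:ℝ) ≤ Real.sqrt n := by
        rw [show (1:ℝ) = Real.sqrt 1 by simp]
        apply Real.sqrt_le_sqrt
        exact_mod_cast hn1
      nlinarith [Real.sqrt_nonneg (n:ℝ)]
    · push_neg at hle
      have hnN₀ : N₀ ≤ n := le_trans (le_max_left _ _) hle.le
      have hn2 : 2 ≤ n := le_trans (le_max_right _ _) hle.le
      set m := ⌊(1/2:ℝ)*n⌋₊ with hm
      have hm1 : 1 ≤ m := half_floor_ge1 n hn2
      have hmn : m < n := half_floor_lt n hn1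
      have hIH : ℓ m ≤ C * Real.sqrt m := IH m hmn hm1
      have hℓℓ : ℓ n ≤ 5/4 * ℓ m := hN₀ n hnN₀
      have hms : Real.sqrt m ≤ Real.sqrt ((1/2:ℝ)*n) :=
        Real.sqrt_le_sqrt (Nat.floor_le (by positivity))
      have hsq : Real.sqrt ((1/2:ℝ)*n) = Real.sqrt (1/2) * Real.sqrt n :=
        Real.sqrt_mul (by norm_num) _
      have h54 : (5/4:ℝ) * Real.sqrt (1/2) ≤ 1 := by
        nlinarith [Real.sq_sqrt (show (0:ℝ) ≤ 1/2 by norm_num),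
          Real.sqrt_nonneg (1/2:ℝ)]
      have hC0 : (0:ℝ) ≤ C := by linarith
      have step1 : ℓ n ≤ 5/4 * (C * Real.sqrt m) := by nlinarith [h.ℓpos (r := r) m]
      have step2 : C * Real.sqrt m ≤ C * (Real.sqrt (1/2) * Real.sqrt n) := by
        apply mul_le_mul_of_nonneg_left _ hC0
        rw [← hsq]; exact hms
      have step3 : (5/4:ℝ) * (C * (Real.sqrt (1/2) * Real.sqrt n))
          = (5/4 * Real.sqrt (1/2)) * (C * Real.sqrt n) := by ring
      have step4 : (5/4 * Real.sqrt (1/2)) * (C * Real.sqrt n) ≤ 1 * (C * Real.sqrt n) := by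
        apply mul_le_mul_of_nonneg_right h54
        positivity
      calc ℓ n ≤ 5/4 * (C * Real.sqrt m) := step1
      _ ≤ 5/4 * (C * (Real.sqrt (1/2) * Real.sqrt n)) := by linarith
      _ = (5/4 * Real.sqrt (1/2)) * (C * Real.sqrt n) := step3
      _ ≤ 1 * (C * Real.sqrt n) := step4
      _ = C * Real.sqrt n := by ring

lemma a_atTop : Tendsto (a r) atTop atTop := by
  obtain ⟨C, hC1, hCb⟩ := h.ℓ_sqrt
  have hC0 : (0:ℝ) < C := by linarith
  have hlow : ∀ n : ℕ, 1 ≤ n → Real.sqrt n / C ≤ a r n := by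
    intro n hn1
    have h1 := h.a_lower n
    have hsn : (0:ℝ) < Real.sqrt n := by
      have : (1:ℝ) ≤ (n:ℝ) := by exact_mod_cast hn1
      apply Real.sqrt_pos.2
      linarith
    have h2 : (n:ℝ) * r n = (n:ℝ) / ℓ n := by
      rw [h.hrℓ]; ring
    have h3 : (n:ℝ) / (C * Real.sqrt n) ≤ (n:ℝ)/ℓ n := by
      apply div_le_div_of_nonneg_left (Nat.cast_nonneg n) (h.ℓpos n)
      exact hCb n hn1
    have h4 : (n:ℝ) / (C * Real.sqrt n) = Real.sqrt n / C := by
      rw [div_eq_div_iff (by positivity) hC0.ne']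
      nlinarith [Real.sq_sqrt (Nat.cast_nonneg n : (0:ℝ) ≤ n)]
    rw [h4] at h3
    rw [h2] at h1
    linarith
  have hsqrtTop : Tendsto (fun n : ℕ => Real.sqrt n) atTop atTop := by
    apply tendsto_atTop_atTop.2
    intro b
    refine ⟨⌈b^2⌉₊, fun n hn => ?_⟩
    rcases le_or_gt b 0 with hb | hb
    · exact le_trans hb (Real.sqrt_nonneg _)
    · rw [show b = Real.sqrt (b^2) by rw [Real.sqrt_sq hb.le]]
      apply Real.sqrt_le_sqrt
      calc b^2 ≤ (⌈b^2⌉₊ : ℝ) := Nat.le_ceil _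
      _ ≤ (n : ℝ) := by exact_mod_cast hn
  have hsq : Tendsto (fun n : ℕ => Real.sqrt n / C) atTop atTop :=
    Tendsto.atTop_div_const hC0 hsqrtTop
  apply tendsto_atTop_mono' atTop _ hsq
  filter_upwards [eventually_ge_atTop 1] with n hn using hlow n hn

lemma a_two_upper : ∀ᶠ m : ℕ in atTop, a r m * ℓ m ≤ 2 * m :=
  (h.aℓ_upper 1 one_pos).mono (fun n hn => by linarith)

noncomputable def G (r : ℕ → ℝ) (n : ℕ) : ℝ :=
  ∑ c ∈ Finset.range n, ∑ a ∈ Finset.range c, r a * (r (c-a) - r c)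

lemma G_term_nonneg {a c : ℕ} (hac : a < c) : 0 ≤ r a * (r (c-a) - r c) := by
  apply mul_nonneg (h.rpos a).le
  have : r c ≤ r (c-a) := h.hmono (Nat.sub_le c a)
  linarith

lemma G_nonneg (n : ℕ) : 0 ≤ G r n := by
  apply Finset.sum_nonneg
  intro c _
  apply Finset.sum_nonneg
  intro a ha
  exact h.G_term_nonneg (Finset.mem_range.1 ha)

lemma G_term_le_one {a c : ℕ} : r a * (r (c-a) - r c) ≤ 1 := by
  have h1 := h.rle1 a
  have h2 := h.rle1 (c-a)
  have h3 := h.rpos c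
  have h4 := h.rpos a
  nlinarith

lemma ratio_bound {m c : ℕ} {η : ℝ} (hη : 0 ≤ η) (hl : ℓ c ≤ (1+η) * ℓ m) :
    r m ≤ (1+η) * r c := by
  have hpm := h.ℓpos (r := r) m
  have hpc := h.ℓpos (r := r) c
  have key : 1 / ℓ m ≤ (1+η) * (1 / ℓ c) := by
    rw [mul_one_div, div_le_div_iff₀ hpm hpc]
    nlinarith
  rw [h.hrℓ, h.hrℓ]
  exact key

set_option maxHeartbeats 1600000 in
lemma var_sum_small : ∀ ε : ℝ, 0 < ε →
    ∀ᶠ n : ℕ in atTop, a r n + 2 * G r n ≤ ε * (a r n)^2 := by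
  intro ε hε
  set ε1 : ℝ := min (ε/128) (1/4) with hε1d
  set η : ℝ := min (ε/24) 1 with hηd
  have hε10 : 0 < ε1 := lt_min (by positivity) (by norm_num)
  have hε14 : ε1 ≤ 1/4 := min_le_right _ _
  have hε1ε : ε1 ≤ ε/128 := min_le_left _ _
  have hη0 : 0 < η := lt_min (by positivity) one_pos
  have hη1 : η ≤ 1 := min_le_right _ _
  have hηε : η ≤ ε/24 := min_le_left _ _
  -- eventual conditions in c
  have hcond1 : ∀ᶠ c : ℕ in atTop, ℓ c ≤ (1+η) * ℓ ⌊ε1*c⌋₊ := by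
    have hlt : (1:ℝ)/(1 + η) < 1 := by
      rw [div_lt_one (by linarith)]; linarith
    have ht := (h.hslow ε1 hε10).eventually (lt_mem_nhds hlt)
    filter_upwards [ht] with c hc
    have hp := h.ℓpos c
    have hq := h.ℓpos (r := r) ⌊ε1*c⌋₊
    rw [div_lt_div_iff₀ (by linarith) hp] at hc
    nlinarith
  have hcond2 : ∀ᶠ c : ℕ in atTop, ℓ c ≤ (1+η) * ℓ ⌊(1-ε1)*c⌋₊ := by
    have hlt : (1:ℝ)/(1 + η) < 1 := by
      rw [div_lt_one (by linarith)]; linarith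
    have ht := (h.hslow (1-ε1) (by linarith)).eventually (lt_mem_nhds hlt)
    filter_upwards [ht] with c hc
    have hp := h.ℓpos c
    have hq := h.ℓpos (r := r) ⌊(1-ε1)*c⌋₊
    rw [div_lt_div_iff₀ (by linarith) hp] at hc
    nlinarith
  obtain ⟨M₁, hM₁⟩ := eventually_atTop.1 h.a_two_upper
  have hfloor_top : Tendsto (fun c : ℕ => ⌊ε1*c⌋₊) atTop atTop := by
    apply tendsto_nat_floor_atTop.comp
    exact Tendsto.const_mul_atTop hε10 tendsto_natCast_atTop_atTop
  have hcond3 : ∀ᶠ c : ℕ in atTop, M₁ ≤ ⌊ε1*c⌋₊ := hfloor_top.eventually_ge_atTop M₁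
  have hcond4 : ∀ᶠ c : ℕ in atTop, (1:ℝ) ≤ ε1*c := by
    have := tendsto_natCast_atTop_atTop (R := ℝ)
    filter_upwards [this.eventually_ge_atTop (1/ε1)] with c hc
    rw [div_le_iff₀ hε10] at hc
    nlinarith
  obtain ⟨C₀, hC₀⟩ := eventually_atTop.1 (hcond1.and (hcond2.and (hcond3.and hcond4)))
  -- the per-c bound for c ≥ C₀
  have inner_bound : ∀ c : ℕ, C₀ ≤ c →
      ∑ a ∈ Finset.range c, r a * (r (c-a) - r c) ≤ (3*η + 16*ε1) * (r c * a r c) := by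
    intro c hc
    obtain ⟨hc1, hc2, hc3, hc4⟩ := hC₀ c hc
    set mε := ⌊ε1*c⌋₊ with hmε
    have hmεr : (mε:ℝ) ≤ ε1*c := Nat.floor_le (by positivity)
    have hmε1 : 1 ≤ mε := Nat.le_floor (by exact_mod_cast hc4)
    have hmεc : mε ≤ c := by
      have h1 : ε1*(c:ℝ) ≤ c := by
        have : (0:ℝ) ≤ c := Nat.cast_nonneg c
        nlinarith
      have : (mε:ℝ) ≤ (c:ℝ) := le_trans hmεr h1
      exact_mod_cast this
    have hrc := h.rpos c
    have hfact1 : ∀ k, mε ≤ k → r k ≤ (1+η) * r c := by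
      intro k hk
      have h1 : r k ≤ r mε := h.hmono hk
      have h2 : r mε ≤ (1+η) * r c := h.ratio_bound hη0.le hc1
      linarith
    have hsubfloor : ⌊(1-ε1)*(c:ℕ)⌋₊ ≤ c - mε := by
      have h1 : (⌊(1-ε1)*(c:ℕ)⌋₊ : ℝ) ≤ (1-ε1)*c :=
        Nat.floor_le (by nlinarith [Nat.cast_nonneg (α := ℝ) c])
      have h2 : (1-ε1)*(c:ℝ) ≤ (c:ℝ) - mε := by nlinarith
      have h3 : ((c - mε : ℕ) : ℝ) = (c:ℝ) - mε := by
        rw [Nat.cast_sub hmεc]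
      have : (⌊(1-ε1)*(c:ℕ)⌋₊ : ℝ) ≤ ((c - mε : ℕ) : ℝ) := by rw [h3]; linarith
      exact_mod_cast this
    have hfact2 : ∀ k, c - mε ≤ k → r k ≤ (1+η) * r c := by
      intro k hk
      have h1 : r k ≤ r ⌊(1-ε1)*(c:ℕ)⌋₊ := h.hmono (le_trans hsubfloor hk)
      have h2 : r ⌊(1-ε1)*(c:ℕ)⌋₊ ≤ (1+η) * r c := h.ratio_bound hη0.le hc2
      linarith
    -- cond3 consequence
    have hcond3' : a r (mε + 1) ≤ 8*ε1*c*(r c) := by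
      have hm : M₁ ≤ mε + 1 := le_trans hc3 (Nat.le_succ _)
      have h1 : a r (mε+1) * ℓ (mε+1) ≤ 2 * ((mε:ℝ)+1) := by
        have := hM₁ _ hm
        push_cast at this
        linarith
      have h2 : a r (mε+1) ≤ 2 * ((mε:ℝ)+1) * r (mε+1) := by
        have hl := h.ℓpos (r := r) (mε+1)
        have hrl := h.rℓ (mε+1)
        have ha := h.a_nonneg (ℓ := ℓ) (mε+1)
        have h3 : a r (mε+1) = a r (mε+1) * (ℓ (mε+1) * r (mε+1)) := by
          rw [mul_comm (ℓ _), hrl, mul_one]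
        rw [h3]
        have hrm1 := h.rpos (mε+1)
        calc a r (mε+1) * (ℓ (mε+1) * r (mε+1)) = (a r (mε+1) * ℓ (mε+1)) * r (mε+1) := by ring
        _ ≤ (2*((mε:ℝ)+1)) * r (mε+1) := by
            apply mul_le_mul_of_nonneg_right h1 hrm1.le
      have h4 : r (mε+1) ≤ 2 * r c := by
        have := hfact1 (mε+1) (Nat.le_succ _)
        nlinarith
      have h5 : (mε:ℝ)+1 ≤ 2*ε1*c := by nlinarith
      have hrm1 := h.rpos (mε+1)
      calc a r (mε+1) ≤ 2 * ((mε:ℝ)+1) * r (mε+1) := h2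
      _ ≤ 2 * (2*ε1*c) * (2 * r c) := by nlinarith
      _ = 8*ε1*c*(r c) := by ring
    -- per-term bound
    have hterm : ∀ a ∈ Finset.range c, r a * (r (c-a) - r c) ≤
        η*(r c)*(r a) + 2*η*(r c)^2 + 2*(r c)*(if c - mε ≤ a then r (c-a) else 0) := by
      intro a ha
      have hac : a < c := Finset.mem_range.1 ha
      have hra := h.rpos a
      have hrca := h.rpos (c-a)
      have hitenn : (0:ℝ) ≤ (if c - mε ≤ a then r (c-a) else 0) := by
        by_cases hxx : c - mε ≤ a
        · rw [if_pos hxx]; exact hrca.le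
        · rw [if_neg hxx]
      by_cases hcase1 : a ≤ mε
      · -- small a
        have hk : c - mε ≤ c - a := Nat.sub_le_sub_left hcase1 c
        have := hfact2 (c-a) hk
        have hd : r (c-a) - r c ≤ η * r c := by linarith
        have : r a * (r (c-a) - r c) ≤ r a * (η * r c) := by
          apply mul_le_mul_of_nonneg_left hd hra.le
        nlinarith [mul_nonneg (mul_nonneg hη0.le hrc.le) hrc.le]
      · push_neg at hcase1
        by_cases hcase2 : a < c - mε
        · -- middle
          have hka : mε ≤ a := hcase1.le
          have hra2 : r a ≤ (1+η) * r c := hfact1 a hka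
          have hkc : mε ≤ c - a := by omega
          have hrca2 : r (c-a) ≤ (1+η) * r c := hfact1 (c-a) hkc
          have hd : r (c-a) - r c ≤ η * r c := by linarith
          have : r a * (r (c-a) - r c) ≤ (2*r c) * (η * r c) := by
            have h1 : r a ≤ 2 * r c := by nlinarith
            have hd0 : 0 ≤ r (c-a) - r c := by
              have : r c ≤ r (c-a) := h.hmono (Nat.sub_le c a)
              linarith
            nlinarith
          nlinarith [mul_nonneg (mul_nonneg hη0.le hrc.le) hra.le]
        · -- large a
          push_neg at hcase2
          have hif : (if c - mε ≤ a then r (c-a) else 0) = r (c-a) := if_pos hcase2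
          have hra2 : r a ≤ (1+η) * r c := hfact2 a hcase2
          have h1 : r a ≤ 2 * r c := by nlinarith
          have hd : r (c-a) - r c ≤ r (c-a) := by linarith
          have hd0 : 0 ≤ r (c-a) - r c := by
            have : r c ≤ r (c-a) := h.hmono (Nat.sub_le c a)
            linarith
          rw [hif]
          have : r a * (r (c-a) - r c) ≤ (2 * r c) * r (c-a) := by nlinarith
          nlinarith [mul_nonneg (mul_nonneg hη0.le hrc.le) hra.le,
            mul_nonneg (mul_nonneg hη0.le hrc.le) hrc.le]
    have hsum := Finset.sum_le_sum hterm
    -- sum the three pieces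
    have hs1 : ∑ a ∈ Finset.range c, η*(r c)*(r a) = η*(r c)* a r c := by
      rw [← Finset.mul_sum]; rfl
    have hs2 : ∑ a ∈ Finset.range c, 2*η*(r c)^2 = (c:ℝ) * (2*η*(r c)^2) := by
      rw [Finset.sum_const, Finset.card_range, nsmul_eq_mul]
    have hs3 : ∑ a ∈ Finset.range c, (if c - mε ≤ a then r (c-a) else 0) ≤ a r (mε+1) := by
      rw [Finset.sum_ite, Finset.sum_const, smul_zero, add_zero]
      have hinj : ∀ x ∈ (Finset.range c).filter (fun a => c - mε ≤ a),
          ∀ y ∈ (Finset.range c).filter (fun a => c - mε ≤ a), c - x = c - y → x = y := by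
        intro x hx y hy hxy
        have hx' := Finset.mem_range.1 (Finset.mem_filter.1 hx).1
        have hy' := Finset.mem_range.1 (Finset.mem_filter.1 hy).1
        omega
      rw [← Finset.sum_image hinj]
      apply Finset.sum_le_sum_of_subset_of_nonneg
      · intro b hb
        obtain ⟨x, hx, rfl⟩ := Finset.mem_image.1 hb
        have hx1 := Finset.mem_range.1 (Finset.mem_filter.1 hx).1
        have hx2 := (Finset.mem_filter.1 hx).2
        apply Finset.mem_range.2
        omega
      · intro b _ _
        exact (h.rpos b).le
    have hcra : (c:ℝ) * r c ≤ a r c := h.a_lower c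
    have harc := h.a_nonneg (ℓ := ℓ) c
    calc ∑ a ∈ Finset.range c, r a * (r (c-a) - r c)
        ≤ ∑ a ∈ Finset.range c, (η*(r c)*(r a) + 2*η*(r c)^2
            + 2*(r c)*(if c - mε ≤ a then r (c-a) else 0)) := hsum
    _ = η*(r c)* a r c + (c:ℝ)*(2*η*(r c)^2)
        + 2*(r c)*(∑ a ∈ Finset.range c, (if c - mε ≤ a then r (c-a) else 0)) := by
        rw [Finset.sum_add_distrib, Finset.sum_add_distrib, hs1, hs2, ← Finset.mul_sum]
    _ ≤ η*(r c)* a r c + 2*η*((r c) * a r c) + 2*(r c)*(8*ε1*c*(r c)) := by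
        have e1 : (c:ℝ)*(2*η*(r c)^2) = 2*η*((r c)*((c:ℝ)*(r c))) := by ring
        have e2 : 2*η*((r c)*((c:ℝ)*(r c))) ≤ 2*η*((r c)* a r c) := by
          apply mul_le_mul_of_nonneg_left _ (by positivity)
          exact mul_le_mul_of_nonneg_left hcra hrc.le
        have e3 : 2*(r c)*(∑ a ∈ Finset.range c, (if c - mε ≤ a then r (c-a) else 0))
            ≤ 2*(r c)*(a r (mε+1)) := by
          apply mul_le_mul_of_nonneg_left _ (by positivity)
          exact hs3
        have e4 : 2*(r c)*(a r (mε+1)) ≤ 2*(r c)*(8*ε1*c*(r c)) := by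
          apply mul_le_mul_of_nonneg_left hcond3' (by positivity)
        rw [e1] at *
        linarith
    _ ≤ (3*η + 16*ε1) * (r c * a r c) := by
        have e5 : 2*(r c)*(8*ε1*c*(r c)) = 16*ε1*((r c)*((c:ℝ)*(r c))) := by ring
        have e6 : 16*ε1*((r c)*((c:ℝ)*(r c))) ≤ 16*ε1*((r c)* a r c) := by
          apply mul_le_mul_of_nonneg_left _ (by positivity)
          exact mul_le_mul_of_nonneg_left hcra hrc.le
        rw [e5]
        nlinarith [mul_nonneg hrc.le harc]
  -- now the global bound
  have hglobal : ∀ n : ℕ, G r n ≤ (C₀:ℝ)^2 + (3*η + 16*ε1) * (a r n)^2 := by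
    intro n
    have hle : G r n ≤ ∑ c ∈ Finset.range n,
        ((if c < C₀ then (C₀:ℝ) else 0) + (3*η + 16*ε1) * (r c * a r c)) := by
      apply Finset.sum_le_sum
      intro c _
      by_cases hc : C₀ ≤ c
      · rw [if_neg (by omega)]
        have := inner_bound c hc
        linarith
      · push_neg at hc
        rw [if_pos hc]
        have h1 : ∑ a ∈ Finset.range c, r a * (r (c-a) - r c) ≤ (c:ℝ) := by
          calc ∑ a ∈ Finset.range c, r a * (r (c-a) - r c)
              ≤ ∑ _a ∈ Finset.range c, (1:ℝ) :=
            Finset.sum_le_sum (fun a _ => h.G_term_le_one)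
          _ = (c:ℝ) := by simp
        have h2 : (c:ℝ) ≤ (C₀:ℝ) := by exact_mod_cast hc.le
        have h3 : (0:ℝ) ≤ (3*η + 16*ε1) * (r c * a r c) := by
          have := h.rpos c
          have := h.a_nonneg (ℓ := ℓ) c
          positivity
        linarith
    rw [Finset.sum_add_distrib] at hle
    have hA : ∑ c ∈ Finset.range n, (if c < C₀ then (C₀:ℝ) else 0) ≤ (C₀:ℝ)^2 := by
      rw [Finset.sum_ite, Finset.sum_const, Finset.sum_const, smul_zero, add_zero,
        nsmul_eq_mul]
      have hcard : ((Finset.range n).filter (fun c => c < C₀)).card ≤ C₀ := by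
        calc ((Finset.range n).filter (fun c => c < C₀)).card
            ≤ (Finset.range C₀).card := by
              apply Finset.card_le_card
              intro x hx
              exact Finset.mem_range.2 (Finset.mem_filter.1 hx).2
        _ = C₀ := Finset.card_range _
      have : (((Finset.range n).filter (fun c => c < C₀)).card : ℝ) ≤ (C₀:ℝ) := by
        exact_mod_cast hcard
      nlinarith [Nat.cast_nonneg (α := ℝ) C₀]
    have hB : ∑ c ∈ Finset.range n, (3*η + 16*ε1) * (r c * a r c)
        ≤ (3*η + 16*ε1) * (a r n)^2 := by
      rw [← Finset.mul_sum]
      apply mul_le_mul_of_nonneg_left _ (by positivity)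
      have : ∑ c ∈ Finset.range n, r c * a r c ≤ ∑ c ∈ Finset.range n, r c * a r n := by
        apply Finset.sum_le_sum
        intro c hc
        apply mul_le_mul_of_nonneg_left _ (h.rpos c).le
        exact h.a_mono (Finset.mem_range.1 hc).le
      have e : ∑ c ∈ Finset.range n, r c * a r n = a r n * a r n := by
        rw [← Finset.sum_mul]
        rfl
      rw [e] at this
      calc ∑ c ∈ Finset.range n, r c * a r c ≤ a r n * a r n := this
      _ = (a r n)^2 := by ring
    linarith
  -- finish
  have hsmall : 2*(3*η + 16*ε1) ≤ ε/2 := by nlinarith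
  have haT := h.a_atTop (ℓ := ℓ)
  filter_upwards [haT.eventually_ge_atTop (max 1 ((1 + 2*(C₀:ℝ)^2) * (2/ε)))] with n hn
  have han1 : (1:ℝ) ≤ a r n := le_trans (le_max_left _ _) hn
  have han2 : (1 + 2*(C₀:ℝ)^2) * (2/ε) ≤ a r n := le_trans (le_max_right _ _) hn
  have hGn := hglobal n
  have h1 : a r n + 2 * G r n ≤ a r n + 2*(C₀:ℝ)^2 + (ε/2) * (a r n)^2 := by
    have e1 : 2 * G r n ≤ 2*(C₀:ℝ)^2 + 2*(3*η + 16*ε1) * (a r n)^2 := by linarith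
    have e2 : 2*(3*η + 16*ε1) * (a r n)^2 ≤ (ε/2) * (a r n)^2 := by
      apply mul_le_mul_of_nonneg_right hsmall (by positivity)
    linarith
  have h2 : a r n + 2*(C₀:ℝ)^2 ≤ (1 + 2*(C₀:ℝ)^2) * a r n := by nlinarith
  have h3 : (1 + 2*(C₀:ℝ)^2) * a r n ≤ (ε/2) * (a r n)^2 := by
    have : (1 + 2*(C₀:ℝ)^2) ≤ (ε/2) * a r n := by
      rw [show (1 + 2*(C₀:ℝ)^2) * (2/ε) = (1 + 2*(C₀:ℝ)^2) / (ε/2) by field_simp] at han2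
      rw [div_le_iff₀ (by positivity)] at han2
      nlinarith
    nlinarith
  calc a r n + 2 * G r n ≤ a r n + 2*(C₀:ℝ)^2 + (ε/2) * (a r n)^2 := h1
  _ ≤ (ε/2) * (a r n)^2 + (ε/2) * (a r n)^2 := by linarith
  _ = ε * (a r n)^2 := by ring

lemma tendsto_var_ratio :
    Tendsto (fun n : ℕ => (a r n + 2 * G r n) / (a r n)^2) atTop (𝓝 0) := by
  rw [Metric.tendsto_atTop]
  intro ε hε
  have h1 := eventually_atTop.1 (h.var_sum_small (ε/2) (by linarith))
  have h2 := eventually_atTop.1 ((h.a_atTop (ℓ := ℓ)).eventually_ge_atTop 1)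
  obtain ⟨N1, hN1⟩ := h1
  obtain ⟨N2, hN2⟩ := h2
  refine ⟨max N1 N2, fun n hn => ?_⟩
  have e1 := hN1 n (le_trans (le_max_left _ _) hn)
  have e2 := hN2 n (le_trans (le_max_right _ _) hn)
  have ha0 : (0:ℝ) < a r n := by linarith
  have hnum0 : 0 ≤ a r n + 2 * G r n := by
    have := h.G_nonneg n
    linarith
  rw [Real.dist_eq, sub_zero, abs_of_nonneg (by positivity)]
  rw [div_lt_iff₀ (by positivity)]
  have : (ε/2) * (a r n)^2 < ε * (a r n)^2 := by
    apply mul_lt_mul_of_pos_right (by linarith) (by positivity)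
  linarith

end Hyp
end LLNRange


namespace LLNRange

lemma card_image_eq_filter_last {β : Type*} [DecidableEq β] (f : ℕ → β) (n : ℕ) :
    ((Finset.range n).image f).card
      = ((Finset.range n).filter (fun k => ∀ j, k < j → j < n → f j ≠ f k)).card := by
  classical
  set P : ℕ → Prop := fun k => ∀ j, k < j → j < n → f j ≠ f k with hP
  have himg : (Finset.range n).image f = ((Finset.range n).filter P).image f := by
    apply Finset.Subset.antisymm
    · intro y hy
      obtain ⟨k, hk, rfl⟩ := Finset.mem_image.1 hy
      set t := (Finset.range n).filter (fun k' => f k' = f k) with ht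
      have htne : t.Nonempty := ⟨k, Finset.mem_filter.2 ⟨hk, rfl⟩⟩
      set K := t.max' htne with hK
      have hKt : K ∈ t := Finset.max'_mem _ _
      have hKr : K ∈ Finset.range n := (Finset.mem_filter.1 hKt).1
      have hKf : f K = f k := (Finset.mem_filter.1 hKt).2
      have hKP : P K := by
        intro j hKj hjn hfj
        have hjt : j ∈ t := Finset.mem_filter.2 ⟨Finset.mem_range.2 hjn, by rw [hfj, hKf]⟩
        have := Finset.le_max' t j hjt
        omega
      apply Finset.mem_image.2
      exact ⟨K, Finset.mem_filter.2 ⟨hKr, hKP⟩, hKf⟩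
    · apply Finset.image_subset_image
      exact Finset.filter_subset _ _
  rw [himg]
  apply Finset.card_image_of_injOn
  intro x hx y hy hxy
  simp only [Finset.coe_filter, Set.mem_setOf_eq, Finset.mem_range] at hx hy
  by_contra hne
  rcases Nat.lt_or_ge x y with hlt | hge
  · exact hx.2 y hlt hy.1 hxy.symm
  · have : y < x := by omega
    exact hy.2 x this hx.1 hxy

lemma double_sum_split (F : ℕ → ℕ → ℝ) (hsym : ∀ j k, F j k = F k j) (n : ℕ) :
    ∑ j ∈ Finset.range n, ∑ k ∈ Finset.range n, F j k
      = ∑ j ∈ Finset.range n, F j j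
        + 2 * ∑ k ∈ Finset.range n, ∑ j ∈ Finset.range k, F j k := by
  induction n with
  | zero => simp
  | succ n IH =>
    rw [Finset.sum_range_succ]
    have hinner : ∀ j, ∑ k ∈ Finset.range (n+1), F j k
        = ∑ k ∈ Finset.range n, F j k + F j n := fun j => Finset.sum_range_succ _ _
    calc ∑ j ∈ Finset.range n, ∑ k ∈ Finset.range (n+1), F j k
          + ∑ k ∈ Finset.range (n+1), F n k
        = (∑ j ∈ Finset.range n, (∑ k ∈ Finset.range n, F j k + F j n))
          + (∑ k ∈ Finset.range n, F n k + F n n) := by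
          rw [Finset.sum_congr rfl (fun j _ => hinner j), hinner n]
    _ = (∑ j ∈ Finset.range n, ∑ k ∈ Finset.range n, F j k)
          + ∑ j ∈ Finset.range n, F j n
          + (∑ k ∈ Finset.range n, F k n + F n n) := by
          rw [Finset.sum_add_distrib]
          congr 2
          exact Finset.sum_congr rfl (fun k _ => hsym n k)
    _ = (∑ j ∈ Finset.range n, F j j
          + 2 * ∑ k ∈ Finset.range n, ∑ j ∈ Finset.range k, F j k)
          + 2 * ∑ j ∈ Finset.range n, F j n + F n n := by rw [IH]; ring
    _ = ∑ j ∈ Finset.range (n+1), F j j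
          + 2 * ∑ k ∈ Finset.range (n+1), ∑ j ∈ Finset.range k, F j k := by
          rw [Finset.sum_range_succ, Finset.sum_range_succ (fun k => ∑ j ∈ Finset.range k, F j k)]
          ring

lemma double_sum_reflect (f g : ℕ → ℕ → ℝ) (n : ℕ)
    (hfg : ∀ j k, j < k → k < n → f j k = g (n-1-k) (n-1-j)) :
    ∑ k ∈ Finset.range n, ∑ j ∈ Finset.range k, f j k
      = ∑ c ∈ Finset.range n, ∑ a ∈ Finset.range c, g a c := by
  rw [Finset.sum_sigma', Finset.sum_sigma']
  apply Finset.sum_nbij' (i := fun p => (⟨n-1-p.2, n-1-p.1⟩ : Σ _ : ℕ, ℕ))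
    (j := fun p => (⟨n-1-p.2, n-1-p.1⟩ : Σ _ : ℕ, ℕ))
  · intro p hp
    simp only [Finset.mem_sigma, Finset.mem_range] at hp ⊢
    omega
  · intro p hp
    simp only [Finset.mem_sigma, Finset.mem_range] at hp ⊢
    omega
  · intro p hp
    simp only [Finset.mem_sigma, Finset.mem_range] at hp
    ext <;> simp <;> omega
  · intro p hp
    simp only [Finset.mem_sigma, Finset.mem_range] at hp
    ext <;> simp <;> omega
  · intro p hp
    simp only [Finset.mem_sigma, Finset.mem_range] at hp
    exact hfg p.2 p.1 hp.2 hp.1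

end LLNRange

namespace LLNRange

variable {d : ℕ} {Ω : Type} [MeasureSpace Ω] [IsProbabilityMeasure (ℙ : Measure Ω)]
  {ν : Measure (Fin d → ℤ)} [IsProbabilityMeasure ν]
  {ξ : ℕ → Ω → (Fin d → ℤ)}

lemma tuple_law (hm : ∀ i, Measurable (ξ i))
    (hind : iIndepFun ξ ℙ)
    (hlaw : ∀ i, Measure.map (ξ i) ℙ = ν) (k m : ℕ) :
    Measure.map (fun ω (i : Fin m) => ξ (k + i) ω) ℙ
      = Measure.pi (fun _ : Fin m => ν) := by
  refine (Measure.pi_eq ?_).symm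
  intro s hs
  rw [Measure.map_apply (measurable_pi_lambda _ fun i => hm _) (MeasurableSet.univ_pi hs)]
  set sets : ℕ → Set (Fin d → ℤ) :=
    fun i => if h : k ≤ i ∧ i - k < m then s ⟨i - k, h.2⟩ else Set.univ with hsets
  have hidx : ∀ i : Fin m, sets (k + (i:ℕ)) = s i := by
    intro i
    have hc : k ≤ k + (i:ℕ) ∧ (k + (i:ℕ)) - k < m := ⟨Nat.le_add_right _ _, by
      rw [Nat.add_sub_cancel_left]; exact i.2⟩
    rw [hsets]
    simp only [dif_pos hc]
    have he : (⟨k + (i:ℕ) - k, hc.2⟩ : Fin m) = i := by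
      apply Fin.ext
      simp [Nat.add_sub_cancel_left]
    rw [he]
  have hpre : (fun ω (i : Fin m) => ξ (k+i) ω) ⁻¹' (Set.univ.pi s)
      = ⋂ i ∈ Finset.image (fun t => k + t) (Finset.range m), ξ i ⁻¹' sets i := by
    ext ω
    simp only [Set.mem_preimage, Set.mem_pi, Set.mem_univ, forall_true_left,
      Set.mem_iInter, Finset.mem_image, Finset.mem_range, Set.mem_preimage]
    constructor
    · rintro hω i ⟨t, ht, rfl⟩
      have h2 := hidx ⟨t, ht⟩
      simp only [Fin.val_mk] at h2
      rw [h2]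
      exact hω ⟨t, ht⟩
    · intro hω i
      have := hω (k + (i:ℕ)) ⟨(i:ℕ), i.2, rfl⟩
      rwa [hidx i] at this
  rw [hpre, hind.measure_inter_preimage_eq_mul _
    (fun i _ => (Set.to_countable _).measurableSet)]
  rw [Finset.prod_image (by intro x _ y _ hxy; simp only at hxy; omega)]
  rw [← Fin.prod_univ_eq_prod_range (fun t => ℙ (ξ (k+t) ⁻¹' sets (k+t))) m]
  apply Finset.prod_congr rfl
  intro i _
  rw [hidx i, ← hlaw (k + (i:ℕ)),
    Measure.map_apply (hm _) ((Set.to_countable _).measurableSet)]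

/-- the event: partial sums of the walk started at time `k` stay nonzero up to time `m`. -/
def Aev (ξ : ℕ → Ω → Fin d → ℤ) (k m : ℕ) : Set Ω :=
  {ω | ∀ j, 1 ≤ j → j ≤ m → ∑ t ∈ Finset.range j, ξ (k+t) ω ≠ 0}

lemma Aev_anti (k : ℕ) {m m' : ℕ} (hmm : m ≤ m') : Aev ξ k m' ⊆ Aev ξ k m := by
  intro ω hω j hj1 hj2
  exact hω j hj1 (le_trans hj2 hmm)

lemma sum_ite_lt_eq (x : ℕ → Fin d → ℤ) (m j : ℕ) (hj : j ≤ m) :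
    (∑ i : Fin m, if (i:ℕ) < j then x i else 0) = ∑ t ∈ Finset.range j, x t := by
  rw [Fin.sum_univ_eq_sum_range (fun t => if t < j then x t else 0) m]
  rw [Finset.sum_ite, Finset.sum_const_zero, add_zero]
  congr 1
  ext t
  simp only [Finset.mem_filter, Finset.mem_range]
  omega

lemma Aev_eq_preimage_fin (k m : ℕ) :
    Aev ξ k m = (fun ω (i : Fin m) => ξ (k+i) ω) ⁻¹'
      {x : Fin m → (Fin d → ℤ) | ∀ j, 1 ≤ j → j ≤ m →
        (∑ i : Fin m, if (i:ℕ) < j then x i else 0) ≠ 0} := by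
  ext ω
  simp only [Aev, Set.mem_preimage, Set.mem_setOf_eq]
  have hs : ∀ j, j ≤ m → (∑ i : Fin m, if (i:ℕ) < j then ξ (k+i) ω else 0)
      = ∑ t ∈ Finset.range j, ξ (k+t) ω :=
    fun j hj => sum_ite_lt_eq (fun t => ξ (k+t) ω) m j hj
  constructor
  · intro hω j hj1 hj2
    rw [hs j hj2]
    exact hω j hj1 hj2
  · intro hω j hj1 hj2
    have := hω j hj1 hj2
    rwa [hs j hj2] at this

lemma Aev_measurable (hm : ∀ i, Measurable (ξ i)) (k m : ℕ) :
    MeasurableSet (Aev ξ k m) := by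
  rw [Aev_eq_preimage_fin]
  exact (measurable_pi_lambda _ fun i => hm _) ((Set.to_countable _).measurableSet)

lemma Aev_prob (hm : ∀ i, Measurable (ξ i))
    (hind : iIndepFun ξ ℙ)
    (hlaw : ∀ i, Measure.map (ξ i) ℙ = ν) (k m : ℕ) :
    ℙ (Aev ξ k m) = ℙ (Aev ξ 0 m) := by
  have hT : ∀ k' : ℕ, ℙ (Aev ξ k' m)
      = Measure.pi (fun _ : Fin m => ν)
        {x : Fin m → (Fin d → ℤ) | ∀ j, 1 ≤ j → j ≤ m →
          (∑ i : Fin m, if (i:ℕ) < j then x i else 0) ≠ 0} := by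
    intro k'
    rw [Aev_eq_preimage_fin, ← tuple_law hm hind hlaw k' m,
      Measure.map_apply (measurable_pi_lambda _ fun i => hm _)
        ((Set.to_countable _).measurableSet)]
  rw [hT k, hT 0]

lemma sum_attach_ite_eq (ω : Ω) (j m mp : ℕ) (h1 : mp ≤ m) :
    (∑ i ∈ (Finset.Ico j (j+m)).attach, if (i:ℕ) < j + mp then ξ (i:ℕ) ω else 0)
      = ∑ t ∈ Finset.range mp, ξ (j+t) ω := by
  rw [Finset.sum_attach (Finset.Ico j (j+m)) (fun i => if i < j + mp then ξ i ω else 0)]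
  rw [Finset.sum_ite, Finset.sum_const_zero, add_zero]
  have hfe : (Finset.Ico j (j+m)).filter (fun i => i < j + mp) = Finset.Ico j (j+mp) := by
    ext t
    simp only [Finset.mem_filter, Finset.mem_Ico]
    omega
  rw [hfe, Finset.sum_Ico_eq_sum_range]
  simp

lemma Aev_eq_preimage_ico (k m : ℕ) :
    Aev ξ k m = (fun ω (i : ↥(Finset.Ico k (k+m))) => ξ (i:ℕ) ω) ⁻¹'
      {x : ↥(Finset.Ico k (k+m)) → (Fin d → ℤ) | ∀ mp, 1 ≤ mp → mp ≤ m →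
        (∑ i ∈ (Finset.Ico k (k+m)).attach, if (i:ℕ) < k + mp then x i else 0) ≠ 0} := by
  ext ω
  simp only [Aev, Set.mem_preimage, Set.mem_setOf_eq]
  constructor
  · intro hω mp h1 h2
    rw [sum_attach_ite_eq ω k m mp h2]
    exact hω mp h1 h2
  · intro hω mp h1 h2
    have := hω mp h1 h2
    rwa [sum_attach_ite_eq ω k m mp h2] at this

lemma Aev_indep (hm : ∀ i, Measurable (ξ i))
    (hind : iIndepFun ξ ℙ)
    (j k m1 m2 : ℕ) (hjk : j + m1 ≤ k) :
    ℙ (Aev ξ j m1 ∩ Aev ξ k m2) = ℙ (Aev ξ j m1) * ℙ (Aev ξ k m2) := by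
  have hdisj : Disjoint (Finset.Ico j (j+m1)) (Finset.Ico k (k+m2)) := by
    rw [Finset.disjoint_left]
    intro x hx hy
    simp only [Finset.mem_Ico] at hx hy
    omega
  have hIF := hind.indepFun_finset _ _ hdisj hm
  rw [Aev_eq_preimage_ico (k := j) (m := m1), Aev_eq_preimage_ico (k := k) (m := m2)]
  exact hIF.measure_inter_preimage_eq_mul _ _
    ((Set.to_countable _).measurableSet) ((Set.to_countable _).measurableSet)

end LLNRange

/-- under Assumption (S) (`r_n = 1/ℓ*(n)` with `ℓ*` slowly varying),
`𝔼[|R(n)|] = (n/ℓ*(n))(1+o(1))` and `|R(n)|/𝔼[|R(n)|] → 1` in probability. -/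
theorem lln_range
    (d : ℕ) (hd : 1 ≤ d)
    (Ω : Type) [MeasureSpace Ω] [IsProbabilityMeasure (ℙ : Measure Ω)]
    (ν : Measure (Fin d → ℤ)) [IsProbabilityMeasure ν]
    (hν : ν ≠ Measure.dirac 0)
    (ξ : ℕ → Ω → (Fin d → ℤ))
    (hξmeas : ∀ i, Measurable (ξ i))
    (hξindep : iIndepFun ξ ℙ)
    (hξlaw : ∀ i, Measure.map (ξ i) ℙ = ν)
    (Y : ℕ → Ω → (Fin d → ℤ))
    (hY : ∀ n ω, Y n ω = ∑ i ∈ Finset.range n, ξ i ω)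
    (r : ℕ → ℝ)
    (hr : ∀ n, r n = (ℙ {ω | ∀ k, 1 ≤ k → k ≤ n → Y k ω ≠ 0}).toReal)
    -- Assumption (S)
    (ℓs : ℕ → ℝ) (hℓ1 : ∀ n, 1 ≤ ℓs n)
    (hslow : ∀ c : ℝ, 0 < c →
      Tendsto (fun n : ℕ => ℓs ⌊c * n⌋₊ / ℓs n) atTop (𝓝 1))
    (hrℓ : ∀ n, r n = 1 / ℓs n)
    -- the range
    (R : ℕ → Ω → Finset (Fin d → ℤ))
    (hR : ∀ n ω, R n ω = (Finset.range n).image (fun k => Y k ω)) :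
    -- 𝔼|R(n)| = (n/ℓ*(n))(1+o(1))
    Tendsto (fun n : ℕ => (∫ ω, ((R n ω).card : ℝ) ∂ℙ) * ℓs n / n) atTop (𝓝 1) ∧
    -- weak law of large numbers for |R(n)|
    (∀ δ : ℝ, 0 < δ →
      Tendsto (fun n : ℕ =>
        (ℙ {ω | δ < |((R n ω).card : ℝ) / (∫ ω', ((R n ω').card : ℝ) ∂ℙ) - 1|}).toReal)
        atTop (𝓝 0)) := by
  -- the hypothesis structure for the analytic lemmas
  have hyp : LLNRange.Hyp r ℓs := by
    refine ⟨hℓ1, hrℓ, ?_, hslow⟩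
    intro m n hmn
    rw [hr, hr]
    apply ENNReal.toReal_mono (measure_ne_top _ _)
    apply measure_mono
    intro ω hω
    intro k h1 h2
    exact hω k h1 (le_trans h2 hmn)
  -- identify the non-return events
  have hA0 : ∀ m, LLNRange.Aev ξ 0 m = {ω | ∀ k, 1 ≤ k → k ≤ m → Y k ω ≠ 0} := by
    intro m
    ext ω
    simp only [LLNRange.Aev, Set.mem_setOf_eq, hY, Nat.zero_add]
  have hprA : ∀ k m, (ℙ (LLNRange.Aev ξ k m)).toReal = r m := by
    intro k m
    rw [LLNRange.Aev_prob hξmeas hξindep hξlaw, hA0, ← hr]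
  -- last-exit events
  set E : ℕ → ℕ → Set Ω :=
    fun k n => {ω | ∀ j, k < j → j < n → Y j ω ≠ Y k ω} with hEdef
  have hYdiff : ∀ k j' ω, Y (k+j') ω = Y k ω + ∑ t ∈ Finset.range j', ξ (k+t) ω := by
    intro k j' ω
    have h1 : ∑ i ∈ Finset.Ico k (k+j'), ξ i ω = ∑ t ∈ Finset.range j', ξ (k+t) ω := by
      rw [Finset.sum_Ico_eq_sum_range]
      have h2 : k + j' - k = j' := by omega
      rw [h2]
    rw [hY, hY, ← h1]
    simp only [Finset.range_eq_Ico]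
    rw [← Finset.sum_Ico_consecutive (fun i => ξ i ω) (Nat.zero_le k) (Nat.le_add_right k j')]
  have hE : ∀ k n, k < n → E k n = LLNRange.Aev ξ k (n-1-k) := by
    intro k n hkn
    ext ω
    simp only [hEdef, LLNRange.Aev, Set.mem_setOf_eq]
    constructor
    · intro hω j' h1 h2
      have hj : k < k + j' := by omega
      have hjn : k + j' < n := by omega
      have := hω (k + j') hj hjn
      intro hzero
      apply this
      rw [hYdiff k j' ω, hzero, add_zero]
    · intro hω j hkj hjn
      have hj' : j = k + (j - k) := by omega
      have h1 : 1 ≤ j - k := by omega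
      have h2 : j - k ≤ n - 1 - k := by omega
      have hS := hω (j - k) h1 h2
      intro heq
      apply hS
      rw [hj'] at heq
      rw [hYdiff k (j-k) ω] at heq
      have := add_left_cancel (a := Y k ω) (b := ∑ t ∈ Finset.range (j-k), ξ (k+t) ω) (c := 0)
      apply this
      rw [add_zero]
      exact heq
  have hEmeas : ∀ k n, k < n → MeasurableSet (E k n) := by
    intro k n hkn
    rw [hE k n hkn]
    exact LLNRange.Aev_measurable hξmeas _ _
  have hprE : ∀ k n, k < n → (ℙ (E k n)).toReal = r (n-1-k) := by
    intro k n hkn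
    rw [hE k n hkn, hprA]
  -- the cardinality of the range as a sum of indicators
  have hcard : ∀ n ω, ((R n ω).card : ℝ)
      = ∑ k ∈ Finset.range n, (if ω ∈ E k n then (1:ℝ) else 0) := by
    intro n ω
    rw [hR, LLNRange.card_image_eq_filter_last (fun k => Y k ω) n, Finset.card_filter]
    rw [Nat.cast_sum]
    apply Finset.sum_congr rfl
    intro k _
    rw [apply_ite (fun x : ℕ => (x : ℝ))]
    norm_num
    exact if_congr Iff.rfl rfl rfl
  -- first moment
  have hind_eq : ∀ (s : Set Ω), (fun ω => if ω ∈ s then (1:ℝ) else 0)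
      = Set.indicator s (fun _ => (1:ℝ)) := by
    intro s
    funext ω
    rw [Set.indicator_apply]
  have hind_int : ∀ (s : Set Ω), MeasurableSet s →
      Integrable (fun ω => if ω ∈ s then (1:ℝ) else 0) ℙ := by
    intro s hs
    rw [hind_eq]
    exact (integrable_const (1:ℝ)).indicator hs
  have hind_intval : ∀ (s : Set Ω), MeasurableSet s →
      (∫ ω, (if ω ∈ s then (1:ℝ) else 0) ∂ℙ) = (ℙ s).toReal := by
    intro s hs
    rw [hind_eq, MeasureTheory.integral_indicator_const (1:ℝ) hs, smul_eq_mul, mul_one, measureReal_def]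
  have hInt : ∀ n, (∫ ω, ((R n ω).card : ℝ) ∂ℙ) = LLNRange.Hyp.a r n := by
    intro n
    have h1 : (∫ ω, ((R n ω).card : ℝ) ∂ℙ)
        = ∫ ω, ∑ k ∈ Finset.range n, (if ω ∈ E k n then (1:ℝ) else 0) ∂ℙ := by
      congr 1
      funext ω
      exact hcard n ω
    rw [h1, MeasureTheory.integral_finset_sum _
      (fun k hk => hind_int _ (hEmeas k n (Finset.mem_range.1 hk)))]
    have h2 : ∀ k ∈ Finset.range n, (∫ ω, (if ω ∈ E k n then (1:ℝ) else 0) ∂ℙ)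
        = r (n-1-k) := by
      intro k hk
      rw [hind_intval _ (hEmeas k n (Finset.mem_range.1 hk)),
        hprE k n (Finset.mem_range.1 hk)]
    rw [Finset.sum_congr rfl h2]
    exact Finset.sum_range_reflect r n
  -- measurability and boundedness of X n
  have hXmeas : ∀ n, Measurable (fun ω => ((R n ω).card : ℝ)) := by
    intro n
    have h1 : (fun ω => ((R n ω).card : ℝ))
        = fun ω => ∑ k ∈ Finset.range n, (if ω ∈ E k n then (1:ℝ) else 0) := by
      funext ω
      exact hcard n ω
    rw [h1]
    apply Finset.measurable_sum
    intro k hk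
    rw [hind_eq]
    exact measurable_const.indicator (hEmeas k n (Finset.mem_range.1 hk))
  have hmem : ∀ n, MemLp (fun ω => ((R n ω).card : ℝ)) 2 ℙ := by
    intro n
    apply MemLp.of_bound ((hXmeas n).aestronglyMeasurable) (n : ℝ)
    apply Filter.Eventually.of_forall
    intro ω
    rw [Real.norm_eq_abs, abs_of_nonneg (by positivity)]
    have h1 : (R n ω).card ≤ n := by
      rw [hR]
      calc ((Finset.range n).image (fun k => Y k ω)).card
          ≤ (Finset.range n).card := Finset.card_image_le
      _ = n := Finset.card_range n
    exact_mod_cast h1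
  -- variance bound
  have hvar : ∀ n, variance (fun ω => ((R n ω).card : ℝ)) ℙ
      ≤ LLNRange.Hyp.a r n + 2 * LLNRange.Hyp.G r n := by
    intro n
    set X : Ω → ℝ := fun ω => ((R n ω).card : ℝ) with hXdef
    set q : ℕ → ℕ → ℝ := fun j k => (ℙ (E j n ∩ E k n)).toReal with hqdef
    set p : ℕ → ℝ := fun j => r (n-1-j) with hpdef
    have hq_sym : ∀ j k, q j k = q k j := by
      intro j k
      rw [hqdef]
      simp only
      rw [Set.inter_comm]
    have hEk_meas : ∀ k, k ∈ Finset.range n → MeasurableSet (E k n) :=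
      fun k hk => hEmeas k n (Finset.mem_range.1 hk)
    -- pointwise square expansion
    have hpt : ∀ ω, (X ω)^2 = ∑ j ∈ Finset.range n, ∑ k ∈ Finset.range n,
        (E j n ∩ E k n).indicator (fun _ => (1:ℝ)) ω := by
      intro ω
      rw [hXdef]
      simp only
      rw [hcard n ω, sq, Finset.sum_mul_sum]
      apply Finset.sum_congr rfl
      intro j _
      apply Finset.sum_congr rfl
      intro k _
      by_cases h1 : ω ∈ E j n <;> by_cases h2 : ω ∈ E k n <;>
        simp [h1, h2, Set.indicator_apply, Set.mem_inter_iff]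
    -- second moment
    have hX2 : (∫ ω, (X ω)^2 ∂ℙ)
        = ∑ j ∈ Finset.range n, ∑ k ∈ Finset.range n, q j k := by
      have h1 : (fun ω => (X ω)^2) = fun ω => ∑ j ∈ Finset.range n,
          ∑ k ∈ Finset.range n, (E j n ∩ E k n).indicator (fun _ => (1:ℝ)) ω := by
        funext ω
        exact hpt ω
      rw [h1]
      refine (MeasureTheory.integral_finset_sum (μ := ℙ) (Finset.range n)
        (f := fun j => fun ω => ∑ k ∈ Finset.range n,
          (E j n ∩ E k n).indicator (fun _ => (1:ℝ)) ω)
        (fun j hj => integrable_finset_sum _ (fun k hk =>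
          (integrable_const (1:ℝ)).indicator
            ((hEk_meas j hj).inter (hEk_meas k hk))))).trans ?_
      apply Finset.sum_congr rfl
      intro j hj
      refine (MeasureTheory.integral_finset_sum (μ := ℙ) (Finset.range n)
        (f := fun k => fun ω => (E j n ∩ E k n).indicator (fun _ => (1:ℝ)) ω)
        (fun k hk => (integrable_const (1:ℝ)).indicator
          ((hEk_meas j hj).inter (hEk_meas k hk)))).trans ?_
      apply Finset.sum_congr rfl
      intro k hk
      rw [MeasureTheory.integral_indicator_const (1:ℝ)
        ((hEk_meas j hj).inter (hEk_meas k hk)), smul_eq_mul, mul_one, measureReal_def]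
    -- first moment squared
    have hM1 : (∫ ω, X ω ∂ℙ) = ∑ j ∈ Finset.range n, p j := by
      rw [hXdef]
      simp only
      rw [hInt n]
      rw [hpdef]
      exact (Finset.sum_range_reflect r n).symm
    have hvd := ProbabilityTheory.variance_eq_sub (hmem n)
    have hvd' : variance X ℙ = (∫ ω, (X ω)^2 ∂ℙ) - (∫ ω, X ω ∂ℙ)^2 := by
      rw [hvd]
      congr 1
    rw [hvd', hX2, hM1, sq, Finset.sum_mul_sum]
    have hsub : ∑ j ∈ Finset.range n, ∑ k ∈ Finset.range n, q j k
        - ∑ j ∈ Finset.range n, ∑ k ∈ Finset.range n, p j * p k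
        = ∑ j ∈ Finset.range n, ∑ k ∈ Finset.range n, (q j k - p j * p k) := by
      rw [← Finset.sum_sub_distrib]
      apply Finset.sum_congr rfl
      intro j _
      rw [← Finset.sum_sub_distrib]
    rw [hsub]
    set F : ℕ → ℕ → ℝ := fun j k => q j k - p j * p k with hFdef
    have hFsym : ∀ j k, F j k = F k j := by
      intro j k
      rw [hFdef]
      simp only
      rw [hq_sym j k, mul_comm]
    rw [LLNRange.double_sum_split F hFsym n]
    -- diagonal
    have hdiag : ∑ j ∈ Finset.range n, F j j ≤ LLNRange.Hyp.a r n := by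
      have h1 : ∀ j ∈ Finset.range n, F j j ≤ r (n-1-j) := by
        intro j hj
        have hjn := Finset.mem_range.1 hj
        have hqd : q j j = r (n-1-j) := by
          rw [hqdef]
          simp only
          rw [Set.inter_self, hprE j n hjn]
        rw [hFdef]
        simp only
        rw [hqd]
        nlinarith [mul_self_nonneg (p j)]
      calc ∑ j ∈ Finset.range n, F j j ≤ ∑ j ∈ Finset.range n, r (n-1-j) :=
        Finset.sum_le_sum h1
      _ = LLNRange.Hyp.a r n := Finset.sum_range_reflect r n
    -- off-diagonal
    have hoff : ∑ k ∈ Finset.range n, ∑ j ∈ Finset.range k, F j k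
        ≤ LLNRange.Hyp.G r n := by
      have hfg : ∑ k ∈ Finset.range n, ∑ j ∈ Finset.range k,
          (r (k-j) * r (n-1-k) - r (n-1-j) * r (n-1-k))
          = LLNRange.Hyp.G r n := by
        apply LLNRange.double_sum_reflect
        intro j k hjk hkn
        have he : (n-1-j) - (n-1-k) = k - j := by omega
        rw [he]
        ring
      rw [← hfg]
      apply Finset.sum_le_sum
      intro k hk
      apply Finset.sum_le_sum
      intro j hj
      have hjk := Finset.mem_range.1 hj
      have hkn := Finset.mem_range.1 hk
      have hjn : j < n := by omega
      -- key covariance bound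
      have hqb : q j k ≤ r (k-j) * r (n-1-k) := by
        have hsub1 : E j n ⊆ LLNRange.Aev ξ j (k-j) := by
          rw [hE j n hjn]
          exact LLNRange.Aev_anti j (by omega)
        have hsub2 : E k n ⊆ LLNRange.Aev ξ k (n-1-k) := by
          rw [hE k n hkn]
        have hmono2 : ℙ (E j n ∩ E k n)
            ≤ ℙ (LLNRange.Aev ξ j (k-j) ∩ LLNRange.Aev ξ k (n-1-k)) :=
          measure_mono (Set.inter_subset_inter hsub1 hsub2)
        have hip := LLNRange.Aev_indep hξmeas hξindep j k (k-j) (n-1-k) (by omega)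
        rw [hip] at hmono2
        have hne : ℙ (LLNRange.Aev ξ j (k-j)) * ℙ (LLNRange.Aev ξ k (n-1-k)) ≠ ⊤ :=
          ENNReal.mul_ne_top (measure_ne_top _ _) (measure_ne_top _ _)
        have := ENNReal.toReal_mono hne hmono2
        rw [ENNReal.toReal_mul, hprA, hprA] at this
        exact this
      rw [hFdef, hpdef]
      simp only
      linarith
    have hG := hoff
    linarith
  constructor
  · have : (fun n : ℕ => (∫ ω, ((R n ω).card : ℝ) ∂ℙ) * ℓs n / n)
        = fun n : ℕ => LLNRange.Hyp.a r n * ℓs n / n := by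
      funext n
      rw [hInt]
    rw [this]
    exact hyp.tendsto_aℓ_div
  · intro δ hδ
    have haT := hyp.a_atTop
    have hbound : ∀ᶠ n : ℕ in atTop,
        (ℙ {ω | δ < |((R n ω).card : ℝ) / (∫ ω', ((R n ω').card : ℝ) ∂ℙ) - 1|}).toReal
        ≤ (1/δ^2) * ((LLNRange.Hyp.a r n + 2 * LLNRange.Hyp.G r n)
            / (LLNRange.Hyp.a r n)^2) := by
      filter_upwards [haT.eventually_ge_atTop 1] with n han
      have ha0 : (0:ℝ) < LLNRange.Hyp.a r n := by linarith
      have hsub : {ω | δ < |((R n ω).card : ℝ) / (∫ ω', ((R n ω').card : ℝ) ∂ℙ) - 1|}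
          ⊆ {ω | δ * LLNRange.Hyp.a r n
              ≤ |((R n ω).card : ℝ) - (∫ ω', ((R n ω').card : ℝ) ∂ℙ)|} := by
        intro ω hω
        simp only [Set.mem_setOf_eq] at hω ⊢
        rw [hInt n] at hω ⊢
        rw [div_sub_one ha0.ne'] at hω
        rw [abs_div, abs_of_pos ha0, lt_div_iff₀ ha0] at hω
        linarith
      have hcheb := ProbabilityTheory.meas_ge_le_variance_div_sq (hmem n)
        (c := δ * LLNRange.Hyp.a r n) (by positivity)
      have hle1 : ℙ {ω | δ < |((R n ω).card : ℝ) / (∫ ω', ((R n ω').card : ℝ) ∂ℙ) - 1|}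
          ≤ ENNReal.ofReal (variance (fun ω => ((R n ω).card : ℝ)) ℙ
              / (δ * LLNRange.Hyp.a r n)^2) := by
        refine le_trans (measure_mono hsub) ?_
        exact hcheb
      have hvnn : 0 ≤ variance (fun ω => ((R n ω).card : ℝ)) ℙ :=
        variance_nonneg _ _
      calc (ℙ {ω | δ < |((R n ω).card : ℝ) / (∫ ω', ((R n ω').card : ℝ) ∂ℙ) - 1|}).toReal
          ≤ (ENNReal.ofReal (variance (fun ω => ((R n ω).card : ℝ)) ℙ
              / (δ * LLNRange.Hyp.a r n)^2)).toReal :=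
            ENNReal.toReal_mono ENNReal.ofReal_ne_top hle1
      _ = variance (fun ω => ((R n ω).card : ℝ)) ℙ / (δ * LLNRange.Hyp.a r n)^2 :=
            ENNReal.toReal_ofReal (by positivity)
      _ ≤ (1/δ^2) * ((LLNRange.Hyp.a r n + 2 * LLNRange.Hyp.G r n)
            / (LLNRange.Hyp.a r n)^2) := by
            have heq : (1/δ^2) * ((LLNRange.Hyp.a r n + 2 * LLNRange.Hyp.G r n)
                / (LLNRange.Hyp.a r n)^2)
                = (LLNRange.Hyp.a r n + 2 * LLNRange.Hyp.G r n)
                  / (δ * LLNRange.Hyp.a r n)^2 := by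
              have hδ0 : δ ≠ 0 := ne_of_gt hδ
              have ha0' : LLNRange.Hyp.a r n ≠ 0 := ne_of_gt ha0
              rw [mul_pow]
              rw [one_div, inv_mul_eq_div, div_div]
              rw [mul_comm ((LLNRange.Hyp.a r n)^2) (δ^2)]
            rw [heq]
            have hd2 : (0:ℝ) < (δ * LLNRange.Hyp.a r n)^2 := by positivity
            exact (div_le_div_iff_of_pos_right hd2).2 (hvar n)
    have hlim : Tendsto (fun n : ℕ => (1/δ^2) * ((LLNRange.Hyp.a r n
        + 2 * LLNRange.Hyp.G r n) / (LLNRange.Hyp.a r n)^2)) atTop (𝓝 ((1/δ^2) * 0)) :=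
      hyp.tendsto_var_ratio.const_mul _
    rw [mul_zero] at hlim
    exact squeeze_zero' (Filter.Eventually.of_forall (fun n => ENNReal.toReal_nonneg))
      hbound hlim
end

section
/- Let ψ_k = 1{Y(l) ≠ Y(k) for all 0 ≤ l < k} (with ψ₀ = 1) be the indicator that the random walk visits a new vertex at time k. Then for all 0 ≤ i ≤ j, 𝔼[ψ_i ψ_j] ≤ 𝔼[ψ_i] · 𝔼[ψ_{j−i}]. -/
open MeasureTheory ProbabilityTheory Filter Finset

/-- Reindexing a truncated/shifted sum as a sum over an interval. -/
lemma aux_sum {M : Type*} [AddCommMonoid M] (g : ℕ → M) (i l m : ℕ) :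
    (∑ k : Fin m, if l ≤ (k : ℕ) then g (i + (k : ℕ)) else 0) =
      ∑ k ∈ Finset.Ico (i + l) (i + m), g k := by
  rw [Fin.sum_univ_eq_sum_range (fun t => if l ≤ t then g (i + t) else 0) m,
    ← Finset.sum_filter]
  have hfi : (Finset.range m).filter (fun t => l ≤ t) = Finset.Ico l m := by
    ext t
    simp only [Finset.mem_filter, Finset.mem_range, Finset.mem_Ico]
    omega
  rw [hfi, Finset.sum_Ico_eq_sum_range, Finset.sum_Ico_eq_sum_range]
  rw [show i + m - (i + l) = m - l from by omega]
  exact Finset.sum_congr rfl fun t _ => by rw [← add_assoc]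

/-- The joint law of `m` consecutive increments (starting at index `i`) is the
product measure `ν^m`, in particular it does not depend on `i`. -/
lemma aux_law {d : ℕ} {Ω : Type} [MeasureSpace Ω] [IsProbabilityMeasure (ℙ : Measure Ω)]
    {ν : Measure (Fin d → ℤ)} [IsProbabilityMeasure ν]
    {ξ : ℕ → Ω → (Fin d → ℤ)} (hξmeas : ∀ i, Measurable (ξ i))
    (hξindep : iIndepFun ξ ℙ)
    (hξlaw : ∀ i, Measure.map (ξ i) ℙ = ν) (i m : ℕ) :
    Measure.map (fun ω (k : Fin m) => ξ (i + (k : ℕ)) ω) ℙ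
      = Measure.pi (fun _ : Fin m => ν) := by
  have hW : Measurable (fun ω (k : Fin m) => ξ (i + (k : ℕ)) ω) :=
    measurable_pi_lambda _ fun k => hξmeas _
  refine (Measure.pi_eq fun s hs => ?_).symm
  rw [Measure.map_apply hW (MeasurableSet.univ_pi hs)]
  classical
  set sets : ℕ → Set (Fin d → ℤ) :=
    fun n => if h : i ≤ n ∧ n - i < m then s ⟨n - i, h.2⟩ else Set.univ with hsets
  have hsets_meas : ∀ n, MeasurableSet (sets n) := by
    intro n
    simp only [hsets]
    split_ifs
    exacts [hs _, MeasurableSet.univ]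
  have hinj : Function.Injective (fun k : Fin m => i + (k : ℕ)) := by
    intro a b hab
    have hab' : i + (a : ℕ) = i + (b : ℕ) := hab
    exact Fin.ext (by omega)
  set S : Finset ℕ := Finset.map ⟨fun k : Fin m => i + (k : ℕ), hinj⟩ Finset.univ with hS
  have hsets_eq : ∀ k : Fin m, sets (i + (k : ℕ)) = s k := by
    intro k
    have h1 : i ≤ i + (k : ℕ) ∧ i + (k : ℕ) - i < m := ⟨Nat.le_add_right _ _, by omega⟩
    simp only [hsets]
    rw [dif_pos h1]
    have h2 : (⟨i + (k : ℕ) - i, h1.2⟩ : Fin m) = k := Fin.ext (by simp only [Fin.val_mk]; omega)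
    rw [h2]
  have hpre : (fun ω (k : Fin m) => ξ (i + (k : ℕ)) ω) ⁻¹' Set.pi Set.univ s
      = ⋂ n ∈ S, ξ n ⁻¹' sets n := by
    ext ω
    simp only [Set.mem_preimage, Set.mem_pi, Set.mem_univ, true_implies, Set.mem_iInter,
      hS, Finset.mem_map, Finset.mem_univ, Function.Embedding.coeFn_mk, true_and]
    constructor
    · rintro h n ⟨k, rfl⟩
      rw [hsets_eq k]
      exact h k
    · intro h k
      have := h (i + (k : ℕ)) ⟨k, rfl⟩
      rwa [hsets_eq k] at this
  rw [hpre, hξindep.measure_inter_preimage_eq_mul S (fun n _ => hsets_meas n), hS,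
    Finset.prod_map]
  refine Finset.prod_congr rfl fun k _ => ?_
  show ℙ (ξ (i + (k : ℕ)) ⁻¹' sets (i + (k : ℕ))) = ν (s k)
  rw [hsets_eq k, ← hξlaw (i + (k : ℕ)), Measure.map_apply (hξmeas _) (hs k)]

/-- For the random walk `Y` with i.i.d. increments `ξ`, with
`ψ_k = 1{Y(l) ≠ Y(k) for all 0 ≤ l < k}` the indicator of visiting a new vertex
at time `k`, one has `𝔼[ψ_i ψ_j] ≤ 𝔼[ψ_i] · 𝔼[ψ_{j-i}]` for all `0 ≤ i ≤ j`. -/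
theorem expectation_psi_product_le
    (d : ℕ) (hd : 1 ≤ d)
    (Ω : Type) [MeasureSpace Ω] [IsProbabilityMeasure (ℙ : Measure Ω)]
    (ν : Measure (Fin d → ℤ)) [IsProbabilityMeasure ν]
    (ξ : ℕ → Ω → (Fin d → ℤ))
    (hξmeas : ∀ i, Measurable (ξ i))
    (hξindep : iIndepFun ξ ℙ)
    (hξlaw : ∀ i, Measure.map (ξ i) ℙ = ν)
    (Y : ℕ → Ω → (Fin d → ℤ))
    (hY : ∀ n ω, Y n ω = ∑ i ∈ Finset.range n, ξ i ω) :
    ∀ i j : ℕ, i ≤ j →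
      (ℙ ({ω | ∀ l, l < i → Y l ω ≠ Y i ω} ∩ {ω | ∀ l, l < j → Y l ω ≠ Y j ω})).toReal ≤
        (ℙ {ω | ∀ l, l < i → Y l ω ≠ Y i ω}).toReal *
          (ℙ {ω | ∀ l, l < j - i → Y l ω ≠ Y (j - i) ω}).toReal := by
  classical
  intro i j hij
  set m := j - i with hm
  -- the target sets in the path space
  set T : ∀ n : ℕ, Set (Fin n → (Fin d → ℤ)) :=
    fun n => {x | ∀ l, l < n → (∑ k : Fin n, if l ≤ (k : ℕ) then x k else 0) ≠ 0} with hT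
  have hTmeas : ∀ n, MeasurableSet (T n) := by
    intro n
    have : T n = ⋂ l ∈ Finset.range n,
        (fun x : Fin n → (Fin d → ℤ) => ∑ k : Fin n, if l ≤ (k : ℕ) then x k else 0) ⁻¹'
          ({0}ᶜ) := by
      ext x
      simp [hT, Finset.mem_range]
    rw [this]
    refine Finset.measurableSet_biInter _ fun l _ => ?_
    refine (Finset.measurable_sum _ fun k _ => ?_) (measurableSet_singleton 0).compl
    split_ifs
    · exact measurable_pi_apply k
    · exact measurable_const
  -- the shifted increment vectors
  set W : ∀ a n : ℕ, Ω → (Fin n → (Fin d → ℤ)) :=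
    fun a n ω k => ξ (a + (k : ℕ)) ω with hWdef
  have hWmeas : ∀ a n, Measurable (W a n) :=
    fun a n => measurable_pi_lambda _ fun k => hξmeas _
  -- difference of the walk as a sum over an interval
  have hdiff : ∀ l n : ℕ, l ≤ n → ∀ ω, (Y l ω ≠ Y n ω ↔ (∑ k ∈ Finset.Ico l n, ξ k ω) ≠ 0) := by
    intro l n hln ω
    rw [hY, hY, Finset.range_eq_Ico, Finset.range_eq_Ico,
      ← Finset.sum_Ico_consecutive (fun k => ξ k ω) (Nat.zero_le l) hln]
    exact not_congr left_eq_add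
  -- the event at time n is the preimage of T n under W 0 n
  have hevent : ∀ n : ℕ, {ω | ∀ l, l < n → Y l ω ≠ Y n ω} = W 0 n ⁻¹' T n := by
    intro n
    ext ω
    simp only [Set.mem_setOf_eq, Set.mem_preimage, hT, hWdef]
    refine forall_congr' fun l => imp_congr_right fun hl => ?_
    rw [hdiff l n hl.le ω, aux_sum (fun k => ξ k ω) 0 l n]
    simp
  -- the j-event is contained in the shifted event
  have hsubset : {ω | ∀ l, l < j → Y l ω ≠ Y j ω} ⊆ W i m ⁻¹' T m := by
    intro ω hω
    simp only [Set.mem_preimage, hT, Set.mem_setOf_eq, hWdef]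
    intro l hl
    rw [aux_sum (fun k => ξ k ω) i l m, show i + m = j from by omega]
    rw [← hdiff (i + l) j (by omega) ω]
    exact hω (i + l) (by omega)
  -- independence of W 0 i and W i m
  have hST : Disjoint (Finset.range i) (Finset.Ico i j) := by
    rw [Finset.disjoint_left]
    intro a ha hb
    rw [Finset.mem_range] at ha
    rw [Finset.mem_Ico] at hb
    omega
  have hIndep0 := hξindep.indepFun_finset (Finset.range i) (Finset.Ico i j) hST hξmeas
  set φ : (↥(Finset.range i) → (Fin d → ℤ)) → (Fin i → (Fin d → ℤ)) :=
    fun y k => y ⟨(k : ℕ), Finset.mem_range.2 k.isLt⟩ with hφdef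
  set ψ : (↥(Finset.Ico i j) → (Fin d → ℤ)) → (Fin m → (Fin d → ℤ)) :=
    fun y k => y ⟨i + (k : ℕ), Finset.mem_Ico.2 ⟨by omega, by omega⟩⟩ with hψdef
  have hφ : Measurable φ := measurable_pi_lambda _ fun k => measurable_pi_apply _
  have hψ : Measurable ψ := measurable_pi_lambda _ fun k => measurable_pi_apply _
  have hIndep : IndepFun (W 0 i) (W i m) ℙ := by
    have h := hIndep0.comp hφ hψ
    have h1 : W 0 i = φ ∘ (fun a (k : ↥(Finset.range i)) => ξ k a) := by
      funext a k
      simp [hWdef, hφdef]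
    have h2 : W i m = ψ ∘ (fun a (k : ↥(Finset.Ico i j)) => ξ k a) := by
      funext a k
      simp [hWdef, hψdef]
    rwa [h1, h2]
  have hmul : ℙ (W 0 i ⁻¹' T i ∩ W i m ⁻¹' T m)
      = ℙ (W 0 i ⁻¹' T i) * ℙ (W i m ⁻¹' T m) :=
    hIndep.measure_inter_preimage_eq_mul (T i) (T m) (hTmeas i) (hTmeas m)
  -- identical distribution of the shifted window
  have hlaws : ℙ (W i m ⁻¹' T m) = ℙ (W 0 m ⁻¹' T m) := by
    rw [← Measure.map_apply (hWmeas i m) (hTmeas m), ← Measure.map_apply (hWmeas 0 m) (hTmeas m),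
      hWdef, aux_law hξmeas hξindep hξlaw i m, aux_law hξmeas hξindep hξlaw 0 m]
  -- putting everything together in ℝ≥0∞
  have key : ℙ ({ω | ∀ l, l < i → Y l ω ≠ Y i ω} ∩ {ω | ∀ l, l < j → Y l ω ≠ Y j ω})
      ≤ ℙ {ω | ∀ l, l < i → Y l ω ≠ Y i ω} * ℙ {ω | ∀ l, l < j - i → Y l ω ≠ Y (j - i) ω} := by
    calc ℙ ({ω | ∀ l, l < i → Y l ω ≠ Y i ω} ∩ {ω | ∀ l, l < j → Y l ω ≠ Y j ω})
        ≤ ℙ ({ω | ∀ l, l < i → Y l ω ≠ Y i ω} ∩ W i m ⁻¹' T m) :=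
          measure_mono (Set.inter_subset_inter_right _ hsubset)
      _ = ℙ (W 0 i ⁻¹' T i ∩ W i m ⁻¹' T m) := by rw [hevent i]
      _ = ℙ (W 0 i ⁻¹' T i) * ℙ (W i m ⁻¹' T m) := hmul
      _ = ℙ {ω | ∀ l, l < i → Y l ω ≠ Y i ω} * ℙ {ω | ∀ l, l < j - i → Y l ω ≠ Y (j - i) ω} := by
          rw [hlaws, ← hevent i, ← hevent m]
  rw [← ENNReal.toReal_mul]
  exact ENNReal.toReal_mono
    (ENNReal.mul_ne_top (measure_ne_top _ _) (measure_ne_top _ _)) key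
end

section
/- Suppose Assumption (S) holds with 1/ℓ*(n) → γ ∈ (0,1) (transient case), and for k ≥ 1 let R^k(⌊Nt⌋) = {x ∈ ℤ^d : L(x,⌊Nt⌋−1) = k}. Then for every t > 0 and every 0 < c₁ < −log(1−γ) there exist constants C < ∞ and c' > 0 such that for every M ∈ ℕ and all N sufficiently large, ℙ[ ∃ k ≥ M such that |R^k(⌊Nt⌋)| ≥ Nt·e^{−c₁ k} ] ≤ C e^{−c' M}. -/
open MeasureTheory ProbabilityTheory Filter Finset Topology
open scoped ENNReal
set_option linter.unusedSectionVars false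
set_option maxHeartbeats 2000000

namespace RWaux

variable {Ω X : Type*} [MeasurableSpace Ω] [MeasurableSpace X]
  [Countable X] [MeasurableSingletonClass X]

def detOn (ξ : ℕ → Ω → X) (A : Set Ω) (S : Finset ℕ) : Prop :=
  ∃ G : Set ({x // x ∈ S} → X), A = (fun ω (i : {x // x ∈ S}) => ξ (i : ℕ) ω) ⁻¹' G

lemma detOn.mono {ξ : ℕ → Ω → X} {A : Set Ω} {S T : Finset ℕ} (h : detOn ξ A S)
    (hST : S ⊆ T) : detOn ξ A T := by
  obtain ⟨G, rfl⟩ := h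
  exact ⟨(fun w (i : {x // x ∈ S}) => w ⟨(i : ℕ), hST i.2⟩) ⁻¹' G, rfl⟩

lemma detOn.inter {ξ : ℕ → Ω → X} {A B : Set Ω} {S : Finset ℕ} (hA : detOn ξ A S)
    (hB : detOn ξ B S) : detOn ξ (A ∩ B) S := by
  obtain ⟨G, rfl⟩ := hA; obtain ⟨H, rfl⟩ := hB
  exact ⟨G ∩ H, rfl⟩


lemma detOn.measurableSet {ξ : ℕ → Ω → X} {A : Set Ω} {S : Finset ℕ}
    (hmeas : ∀ i, Measurable (ξ i)) (h : detOn ξ A S) : MeasurableSet A := by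
  obtain ⟨G, rfl⟩ := h
  exact (G.to_countable.measurableSet).preimage
    (measurable_pi_lambda _ (fun i => hmeas (i : ℕ)))

lemma detOn_inter_prob {ξ : ℕ → Ω → X} {μ : Measure Ω}
    (hind : iIndepFun ξ μ)
    (hmeas : ∀ i, Measurable (ξ i))
    {A B : Set Ω} {S T : Finset ℕ} (hA : detOn ξ A S) (hB : detOn ξ B T)
    (hST : Disjoint S T) : μ (A ∩ B) = μ A * μ B := by
  obtain ⟨G, rfl⟩ := hA; obtain ⟨H, rfl⟩ := hB
  have h := hind.indepFun_finset S T hST hmeas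
  exact h.measure_inter_preimage_eq_mul G H
    (G.to_countable.measurableSet) (H.to_countable.measurableSet)

lemma iIndep_comp_inj {ι ι' : Type*} {ξ : ι → Ω → X} {μ : Measure Ω}
    (hind : iIndepFun ξ μ)
    (u : ι' → ι) (hu : Function.Injective u) :
    iIndepFun (fun i => ξ (u i)) μ := by
  classical
  rw [iIndepFun_iff_measure_inter_preimage_eq_mul] at hind ⊢
  intro S sets hsets
  have hfilt : ∀ i ∈ S, S.filter (fun i' => u i' = u i) = {i} := by
    intro i hi
    ext i'
    simp only [Finset.mem_filter, Finset.mem_singleton]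
    constructor
    · rintro ⟨_, h⟩; exact hu h
    · rintro rfl; exact ⟨hi, rfl⟩
  set sets' : ι → Set X := fun j => ⋂ i ∈ S.filter (fun i' => u i' = j), sets i with hsets'
  have hval : ∀ i ∈ S, sets' (u i) = sets i := by
    intro i hi
    rw [hsets']
    simp only [hfilt i hi]
    simp
  have hmeas' : ∀ j ∈ S.image u, MeasurableSet (sets' j) := by
    intro j hj
    exact MeasurableSet.biInter (Finset.countable_toSet _)
      (fun i hi => hsets i (Finset.mem_filter.1 hi).1)
  have hset_eq : (⋂ i ∈ S, (fun ω => ξ (u i) ω) ⁻¹' sets i)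
      = ⋂ j ∈ S.image u, ξ j ⁻¹' sets' j := by
    ext ω
    simp only [Set.mem_iInter, Set.mem_preimage, hsets', Finset.mem_image, Finset.mem_filter]
    constructor
    · rintro h j ⟨i, hi, rfl⟩
      intro i' hi'
      obtain ⟨hi'S, hui'⟩ := hi'
      have := h i' hi'S
      rwa [hui'] at this
    · intro h i hi
      have := h (u i) ⟨i, hi, rfl⟩ i ⟨hi, rfl⟩
      exact this
  calc μ (⋂ i ∈ S, (fun ω => ξ (u i) ω) ⁻¹' sets i)
      = μ (⋂ j ∈ S.image u, ξ j ⁻¹' sets' j) := by rw [hset_eq]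
    _ = ∏ j ∈ S.image u, μ (ξ j ⁻¹' sets' j) := hind _ hmeas'
    _ = ∏ i ∈ S, μ (ξ (u i) ⁻¹' sets' (u i)) :=
        Finset.prod_image (fun a _ b _ h => hu h)
    _ = ∏ i ∈ S, μ ((fun ω => ξ (u i) ω) ⁻¹' sets i) := by
        exact Finset.prod_congr rfl (fun i hi => by rw [hval i hi])

lemma prob_preimage_tuple {ξ : ℕ → Ω → X} {μ : Measure Ω} {ν : Measure X}
    [IsProbabilityMeasure μ]
    (hind : iIndepFun ξ μ)
    (hmeas : ∀ i, Measurable (ξ i)) (hlaw : ∀ i, Measure.map (ξ i) μ = ν)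
    (p g : ℕ) (E : Set (Fin g → X)) :
    μ ((fun ω (m : Fin g) => ξ (p + (m : ℕ)) ω) ⁻¹' E)
      = ∑' v : E, ∏ m : Fin g, ν {(v : Fin g → X) m} := by
  set V : Ω → (Fin g → X) := fun ω (m : Fin g) => ξ (p + (m : ℕ)) ω with hV
  have hVmeas : Measurable V := measurable_pi_lambda _ (fun m => hmeas _)
  have hre : iIndepFun
      (fun m : Fin g => ξ (p + (m : ℕ))) μ :=
    iIndep_comp_inj hind (fun m : Fin g => p + (m : ℕ))
      (fun a b h => Fin.ext (Nat.add_left_cancel h))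
  have hsingle : ∀ v : Fin g → X, μ (V ⁻¹' {v}) = ∏ m : Fin g, ν {v m} := by
    intro v
    have h1 : V ⁻¹' {v} = ⋂ m : Fin g, (fun ω => ξ (p + (m : ℕ)) ω) ⁻¹' {v m} := by
      ext ω
      simp [hV, funext_iff]
    rw [h1, hre.meas_iInter (fun m => ⟨{v m}, measurableSet_singleton _, rfl⟩)]
    exact Finset.prod_congr rfl (fun m _ => by
      rw [← hlaw (p + (m : ℕ)), Measure.map_apply (hmeas _) (measurableSet_singleton _)])
  have hdecomp : V ⁻¹' E = ⋃ v ∈ E, V ⁻¹' {v} := (Set.biUnion_preimage_singleton V E).symm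
  have hdisj : E.PairwiseDisjoint (fun v => V ⁻¹' {v}) :=
    fun v _ v' _ hne => Set.disjoint_left.2 (fun ω h1 h2 =>
      hne ((Set.mem_singleton_iff.1 h1).symm.trans (Set.mem_singleton_iff.1 h2)))
  have hmeasb : ∀ v ∈ E, MeasurableSet (V ⁻¹' {v}) :=
    fun v _ => hVmeas (measurableSet_singleton v)
  rw [hdecomp, measure_biUnion E.to_countable hdisj hmeasb]
  exact tsum_congr (fun v => hsingle v)

variable [AddCommGroup X]

def blockD (ξ : ℕ → Ω → X) (p a : ℕ) : Set Ω :=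
  {ω | (∑ i ∈ Finset.Ico p (p + a), ξ i ω) = 0 ∧
    ∀ l, 0 < l → l < a → (∑ i ∈ Finset.Ico p (p + l), ξ i ω) ≠ 0}

def chainC (ξ : ℕ → Ω → X) : ℕ → List ℕ → Set Ω
  | _, [] => Set.univ
  | p, a :: l => blockD ξ p a ∩ chainC ξ (p + a) l

lemma detOn_blockD (ξ : ℕ → Ω → X) (p a : ℕ) :
    detOn ξ (blockD ξ p a) (Finset.Ico p (p + a)) := by
  classical
  refine ⟨{w | (∑ i ∈ Finset.Ico p (p + a),
      (if h : i ∈ Finset.Ico p (p + a) then w ⟨i, h⟩ else 0)) = 0 ∧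
    ∀ l, 0 < l → l < a → (∑ i ∈ Finset.Ico p (p + l),
      (if h : i ∈ Finset.Ico p (p + a) then w ⟨i, h⟩ else 0)) ≠ 0}, ?_⟩
  ext ω
  have key : ∀ l, l ≤ a → (∑ i ∈ Finset.Ico p (p + l),
      (if h : i ∈ Finset.Ico p (p + a) then ξ i ω else 0)) = ∑ i ∈ Finset.Ico p (p + l), ξ i ω := by
    intro l hl
    refine Finset.sum_congr rfl (fun i hi => ?_)
    rw [Finset.mem_Ico] at hi
    rw [dif_pos (Finset.mem_Ico.2 (by omega))]
  simp only [blockD, Set.mem_setOf_eq, Set.mem_preimage]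
  rw [key a le_rfl]
  constructor
  · rintro ⟨h1, h2⟩
    exact ⟨h1, fun l hl hla => by rw [key l hla.le]; exact h2 l hl hla⟩
  · rintro ⟨h1, h2⟩
    exact ⟨h1, fun l hl hla => by have := h2 l hl hla; rwa [key l hla.le] at this⟩

lemma detOn_chainC (ξ : ℕ → Ω → X) : ∀ (l : List ℕ) (p : ℕ),
    detOn ξ (chainC ξ p l) (Finset.Ico p (p + l.sum)) := by
  intro l
  induction l with
  | nil => intro p; exact ⟨Set.univ, by simp [chainC]⟩
  | cons a l ih =>
    intro p
    have h1 : detOn ξ (blockD ξ p a) (Finset.Ico p (p + (a :: l).sum)) :=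
      (detOn_blockD ξ p a).mono (Finset.Ico_subset_Ico le_rfl (by simp only [List.sum_cons]; omega))
    have h2 : detOn ξ (chainC ξ (p + a) l) (Finset.Ico p (p + (a :: l).sum)) := by
      refine (ih (p + a)).mono (Finset.Ico_subset_Ico (by omega) (by simp only [List.sum_cons]; omega))
    exact h1.inter h2

lemma blockD_eq_preimage (ξ : ℕ → Ω → X) (p a : ℕ) :
    blockD ξ p a = (fun ω (m : Fin a) => ξ (p + (m : ℕ)) ω) ⁻¹'
      {v : Fin a → X | (∑ m ∈ Finset.range a, (if h : m < a then v ⟨m, h⟩ else 0)) = 0 ∧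
        ∀ l, 0 < l → l < a →
          (∑ m ∈ Finset.range l, (if h : m < a then v ⟨m, h⟩ else 0)) ≠ 0} := by
  classical
  ext ω
  have key : ∀ l, l ≤ a → (∑ m ∈ Finset.range l,
      (if h : m < a then ξ (p + m) ω else 0)) = ∑ i ∈ Finset.Ico p (p + l), ξ i ω := by
    intro l hl
    rw [Finset.sum_Ico_eq_sum_range]
    simp only [Nat.add_sub_cancel_left]
    refine Finset.sum_congr rfl (fun m hm => ?_)
    rw [Finset.mem_range] at hm
    rw [dif_pos (by omega)]
  simp only [blockD, Set.mem_setOf_eq, Set.mem_preimage]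
  rw [key a le_rfl]
  constructor
  · rintro ⟨h1, h2⟩
    exact ⟨h1, fun l hl hla => by rw [key l hla.le]; exact h2 l hl hla⟩
  · rintro ⟨h1, h2⟩
    exact ⟨h1, fun l hl hla => by have := h2 l hl hla; rwa [key l hla.le] at this⟩

lemma blockD_shift {ξ : ℕ → Ω → X} {μ : Measure Ω} {ν : Measure X}
    [IsProbabilityMeasure μ]
    (hind : iIndepFun ξ μ)
    (hmeas : ∀ i, Measurable (ξ i)) (hlaw : ∀ i, Measure.map (ξ i) μ = ν)
    (p a : ℕ) : μ (blockD ξ p a) = μ (blockD ξ 0 a) := by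
  rw [blockD_eq_preimage ξ p a, blockD_eq_preimage ξ 0 a,
    prob_preimage_tuple hind hmeas hlaw p a _, prob_preimage_tuple hind hmeas hlaw 0 a _]

lemma prob_chainC {ξ : ℕ → Ω → X} {μ : Measure Ω} {ν : Measure X}
    [IsProbabilityMeasure μ]
    (hind : iIndepFun ξ μ)
    (hmeas : ∀ i, Measurable (ξ i)) (hlaw : ∀ i, Measure.map (ξ i) μ = ν) :
    ∀ (l : List ℕ) (p : ℕ),
      μ (chainC ξ p l) = (l.map (fun a => μ (blockD ξ 0 a))).prod := by
  intro l
  induction l with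
  | nil => intro p; simp [chainC]
  | cons a l ih =>
    intro p
    have heq : chainC ξ p (a :: l) = blockD ξ p a ∩ chainC ξ (p + a) l := rfl
    rw [heq, detOn_inter_prob hind hmeas (detOn_blockD ξ p a) (detOn_chainC ξ l (p + a))
      (Finset.Ico_disjoint_Ico_consecutive p (p + a) (p + a + l.sum)),
      blockD_shift hind hmeas hlaw, ih (p + a), List.map_cons, List.prod_cons]

lemma mem_chainC {ξ : ℕ → Ω → X} {ω : Ω} : ∀ (l : List ℕ) (u : ℕ → ℕ)
    (_hstep : ∀ i < l.length, u (i + 1) = u i + l.getD i 0)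
    (_hD : ∀ i < l.length, ω ∈ blockD ξ (u i) (l.getD i 0)),
    ω ∈ chainC ξ (u 0) l := by
  intro l
  induction l with
  | nil => intro u _ _; trivial
  | cons a l ih =>
    intro u hstep hD
    have h0 : ω ∈ blockD ξ (u 0) a := by have := hD 0 (by simp); simpa using this
    have h1 : u 1 = u 0 + a := by have := hstep 0 (by simp); simpa using this
    refine ⟨h0, ?_⟩
    have := ih (fun i => u (i + 1))
      (fun i hi => by have := hstep (i + 1) (by simp; omega); simpa using this)
      (fun i hi => by have := hD (i + 1) (by simp; omega); simpa using this)
    have this2 : ω ∈ chainC ξ (u 1) l := this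
    rw [h1] at this2
    exact this2

end RWaux
open MeasureTheory ProbabilityTheory Filter Finset Topology RWaux
open scoped ENNReal

/-- under Assumption (S) with `1/ℓ*(n) → γ ∈ (0,1)` (transient case),
for every `t > 0` and `0 < c₁ < −log(1−γ)` there are `C < ∞` and `c' > 0` such that
for every `M` and all `N` large enough,
`ℙ[∃ k ≥ M, |R^k(⌊Nt⌋)| ≥ Nt e^{−c₁k}] ≤ C e^{−c'M}`. -/
theorem exponential_bound_level_sets
    (d : ℕ) (hd : 1 ≤ d)
    (Ω : Type) [MeasureSpace Ω] [IsProbabilityMeasure (ℙ : Measure Ω)]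
    (ν : Measure (Fin d → ℤ)) [IsProbabilityMeasure ν]
    (hν : ν ≠ Measure.dirac 0)
    (ξ : ℕ → Ω → (Fin d → ℤ))
    (hξmeas : ∀ i, Measurable (ξ i))
    (hξindep : iIndepFun ξ ℙ)
    (hξlaw : ∀ i, Measure.map (ξ i) ℙ = ν)
    (Y : ℕ → Ω → (Fin d → ℤ))
    (hY : ∀ n ω, Y n ω = ∑ i ∈ Finset.range n, ξ i ω)
    (L : (Fin d → ℤ) → ℕ → Ω → ℕ)
    (hL : ∀ x n ω, L x n ω = ((Finset.range (n + 1)).filter (fun j => Y j ω = x)).card)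
    (r : ℕ → ℝ)
    (hr : ∀ n, r n = (ℙ {ω | ∀ k, 1 ≤ k → k ≤ n → Y k ω ≠ 0}).toReal)
    -- Assumption (S)
    (ℓs : ℕ → ℝ) (hℓ1 : ∀ n, 1 ≤ ℓs n)
    (hslow : ∀ c : ℝ, 0 < c →
      Tendsto (fun n : ℕ => ℓs ⌊c * n⌋₊ / ℓs n) atTop (𝓝 1))
    (hrℓ : ∀ n, r n = 1 / ℓs n)
    -- transient case
    (γ : ℝ) (hγ0 : 0 < γ) (hγ1 : γ < 1)
    (htrans : Tendsto (fun n : ℕ => 1 / ℓs n) atTop (𝓝 γ))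
    -- the sets R^k(⌊Nt⌋)
    (Rk : ℕ → ℕ → Ω → Finset (Fin d → ℤ))
    (hRk : ∀ k n ω, Rk k n ω = ((Finset.range n).image (fun j => Y j ω)).filter
      (fun x => L x (n - 1) ω = k)) :
    ∀ t c₁ : ℝ, 0 < t → 0 < c₁ → c₁ < -Real.log (1 - γ) →
      ∃ C c' : ℝ, 0 < C ∧ 0 < c' ∧ ∀ M : ℕ, ∀ᶠ N : ℕ in atTop,
        (ℙ {ω | ∃ k : ℕ, M ≤ k ∧
            (N : ℝ) * t * Real.exp (-c₁ * k) ≤ ((Rk k ⌊(N : ℝ) * t⌋₊ ω).card : ℝ)}).toReal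
          ≤ C * Real.exp (-c' * M) := by
  intro t c₁ ht hc₁ hc₁'
  classical
  set β : ℝ := 1 - γ with hβ
  have hβ0 : 0 < β := by rw [hβ]; linarith
  have hβ1 : β < 1 := by rw [hβ]; linarith
  set ρ : ℝ := Real.exp c₁ * β with hρ
  have hρ0 : 0 < ρ := mul_pos (Real.exp_pos _) hβ0
  have hρ1 : ρ < 1 := by
    have h2 : Real.exp c₁ < Real.exp (-Real.log β) := Real.exp_lt_exp.2 hc₁'
    have h3 : Real.exp (-Real.log β) = β⁻¹ := by rw [Real.exp_neg, Real.exp_log hβ0]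
    calc ρ = Real.exp c₁ * β := rfl
      _ < β⁻¹ * β := mul_lt_mul_of_pos_right (h3 ▸ h2) hβ0
      _ = 1 := inv_mul_cancel₀ hβ0.ne'
  -- measurability of the walk
  have hYmeas : ∀ m, Measurable (Y m) := by
    intro m
    have he : Y m = fun ω => ∑ i ∈ Finset.range m, ξ i ω := funext (hY m)
    rw [he]
    exact Finset.measurable_sum _ (fun i _ => hξmeas i)
  -- non-return events
  set Ev : ℕ → Set Ω := fun n => {ω | ∀ k, 1 ≤ k → k ≤ n → Y k ω ≠ 0} with hEv
  have hEvMeas : ∀ n, MeasurableSet (Ev n) := by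
    intro n
    have he : Ev n = ⋂ k ∈ Finset.Icc 1 n, (Y k ⁻¹' {0})ᶜ := by
      ext ω
      simp only [hEv, Set.mem_setOf_eq, Set.mem_iInter, Finset.mem_Icc, Set.mem_compl_iff,
        Set.mem_preimage, Set.mem_singleton_iff]
      exact ⟨fun h k hk => h k hk.1 hk.2, fun h k h1 h2 => h k ⟨h1, h2⟩⟩
    rw [he]
    exact MeasurableSet.biInter (Finset.countable_toSet _)
      (fun k _ => ((hYmeas k) (measurableSet_singleton 0)).compl)
  have hrEv : ∀ n, r n = (ℙ (Ev n)).toReal := hr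
  have hrγ : ∀ n, γ ≤ r n := by
    have hrt : Tendsto r atTop (𝓝 γ) := by
      have : r = fun n => 1 / ℓs n := funext hrℓ
      rw [this]; exact htrans
    have hanti : Antitone r := by
      apply antitone_nat_of_succ_le
      intro n
      rw [hrEv, hrEv]
      apply ENNReal.toReal_mono (measure_ne_top _ _)
      apply measure_mono
      intro ω hω k h1 h2
      exact hω k h1 (h2.trans (Nat.le_succ n))
    exact fun n => hanti.le_of_tendsto hrt n
  have hEvγ : ∀ n, ENNReal.ofReal γ ≤ ℙ (Ev n) := fun n =>
    ENNReal.ofReal_le_of_le_toReal ((hrγ n).trans_eq (hrEv n))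
  -- block events via the walk
  have hsumY : ∀ p q (ω : Ω), p ≤ q → ∑ i ∈ Finset.Ico p q, ξ i ω = Y q ω - Y p ω := by
    intro p q ω h
    rw [hY, hY, Finset.sum_Ico_eq_sub _ h]
  have hblockY : ∀ p a, blockD ξ p a =
      {ω | Y (p + a) ω = Y p ω ∧ ∀ l, 0 < l → l < a → Y (p + l) ω ≠ Y p ω} := by
    intro p a
    ext ω
    simp only [blockD, Set.mem_setOf_eq]
    rw [hsumY p (p + a) ω (by omega), sub_eq_zero]
    constructor
    · rintro ⟨h1, h2⟩
      refine ⟨h1, fun l hl hla => ?_⟩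
      have h3 := h2 l hl hla
      rw [hsumY p (p + l) ω (by omega)] at h3
      exact sub_ne_zero.1 h3
    · rintro ⟨h1, h2⟩
      refine ⟨h1, fun l hl hla => ?_⟩
      rw [hsumY p (p + l) ω (by omega)]
      exact sub_ne_zero.2 (h2 l hl hla)
  have hblock0 : ∀ a, blockD ξ 0 a =
      {ω | Y a ω = 0 ∧ ∀ l, 0 < l → l < a → Y l ω ≠ 0} := by
    intro a
    rw [hblockY 0 a]
    have hY0 : Y 0 = fun _ : Ω => 0 := funext (fun ω => by rw [hY]; simp)
    ext ω
    simp [hY0]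
  -- sum of first-return probabilities
  have hfle : ∀ n : ℕ, ∑ a ∈ Finset.Icc 1 n, ℙ (blockD ξ 0 a) ≤ ENNReal.ofReal β := by
    intro m
    have hdisj2 : ∀ a b : ℕ, 1 ≤ a → a < b → Disjoint (blockD ξ 0 a) (blockD ξ 0 b) := by
      intro a b ha hab
      rw [hblock0, hblock0]
      apply Set.disjoint_left.2
      rintro ω ⟨h1, -⟩ ⟨-, h2⟩
      exact h2 a ha hab h1
    have hdisj : (↑(Finset.Icc 1 m) : Set ℕ).PairwiseDisjoint (fun a => blockD ξ 0 a) := by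
      intro a ha b hb hne
      simp only [Finset.coe_Icc, Set.mem_Icc] at ha hb
      rcases lt_or_gt_of_ne hne with h | h
      · exact hdisj2 a b ha.1 h
      · exact (hdisj2 b a hb.1 h).symm
    have hmeasD : ∀ a : ℕ, MeasurableSet (blockD ξ 0 a) := fun a =>
      (detOn_blockD ξ 0 a).measurableSet hξmeas
    have hU : ⋃ a ∈ Finset.Icc 1 m, blockD ξ 0 a ⊆ (Ev m)ᶜ := by
      intro ω hω
      rw [Set.mem_iUnion] at hω
      obtain ⟨a, hω⟩ := hω
      rw [Set.mem_iUnion] at hω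
      obtain ⟨ha, hω⟩ := hω
      rw [Finset.mem_Icc] at ha
      rw [hblock0] at hω
      intro hcon
      exact hcon a ha.1 ha.2 hω.1
    calc ∑ a ∈ Finset.Icc 1 m, ℙ (blockD ξ 0 a)
        = ℙ (⋃ a ∈ Finset.Icc 1 m, blockD ξ 0 a) :=
          (measure_biUnion_finset hdisj (fun a _ => hmeasD a)).symm
      _ ≤ ℙ ((Ev m)ᶜ) := measure_mono hU
      _ = 1 - ℙ (Ev m) := by
          rw [measure_compl (hEvMeas m) (measure_ne_top _ _), measure_univ]
      _ ≤ 1 - ENNReal.ofReal γ := tsub_le_tsub_left (hEvγ m) 1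
      _ = ENNReal.ofReal β := by
          rw [hβ, ← ENNReal.ofReal_one, ← ENNReal.ofReal_sub _ hγ0.le]
  -- go
  refine ⟨β⁻¹ * (1 - ρ)⁻¹, -Real.log ρ, mul_pos (inv_pos.2 hβ0) (inv_pos.2 (by linarith)), neg_pos.2 (Real.log_neg hρ0 hρ1), ?_⟩
  intro M
  have hNt : Tendsto (fun N : ℕ => (N : ℝ) * t) atTop atTop :=
    Tendsto.atTop_mul_const ht tendsto_natCast_atTop_atTop
  filter_upwards [hNt.eventually_ge_atTop 1] with N hN1
  set n : ℕ := ⌊(N : ℝ) * t⌋₊ with hn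
  have hNt0 : 0 < (N : ℝ) * t := lt_of_lt_of_le zero_lt_one hN1
  have hn1 : 1 ≤ n := Nat.le_floor (by exact_mod_cast hN1)
  have hnle : (n : ℝ) ≤ (N : ℝ) * t := Nat.floor_le hNt0.le
  -- the level events
  set A : ℕ → Set Ω := fun k =>
    {ω | (N : ℝ) * t * Real.exp (-c₁ * k) ≤ ((Rk k n ω).card : ℝ)} with hA
  have hRkcard : ∀ k ω, ∀ x ∈ Rk k n ω,
      ((Finset.range n).filter (fun j => Y j ω = x)).card = k := by
    intro k ω x hx
    rw [hRk] at hx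
    obtain ⟨-, hLx⟩ := Finset.mem_filter.1 hx
    rw [hL] at hLx
    have hnn : n - 1 + 1 = n := by omega
    rwa [hnn] at hLx
  have hsub : {ω | ∃ k : ℕ, M ≤ k ∧
      (N : ℝ) * t * Real.exp (-c₁ * k) ≤ ((Rk k n ω).card : ℝ)}
        ⊆ ⋃ k ∈ Finset.Icc (max M 1) n, A k := by
    rintro ω ⟨k, hMk, hk⟩
    have hnn : n - 1 + 1 = n := by omega
    have hk1 : k ≠ 0 := by
      rintro rfl
      have hemp : Rk 0 n ω = ∅ := by
        rw [hRk, Finset.filter_eq_empty_iff]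
        intro x hx
        rw [Finset.mem_image] at hx
        obtain ⟨j, hj, hYj⟩ := hx
        rw [hL, hnn]
        intro h0
        rw [Finset.card_eq_zero] at h0
        have hjm : j ∈ (Finset.range n).filter (fun j => Y j ω = x) :=
          Finset.mem_filter.2 ⟨hj, hYj⟩
        rw [h0] at hjm
        exact absurd hjm (Finset.notMem_empty j)
      rw [hemp] at hk
      simp only [Finset.card_empty, Nat.cast_zero] at hk
      have hpos : (0:ℝ) < (N:ℝ) * t * Real.exp (-c₁ * 0) := by positivity
      linarith
    have hkn : k ≤ n := by
      by_contra hcon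
      push_neg at hcon
      have hemp : Rk k n ω = ∅ := by
        rw [hRk, Finset.filter_eq_empty_iff]
        intro x _
        rw [hL, hnn]
        intro h0
        have hle := Finset.card_filter_le (Finset.range n) (fun j => Y j ω = x)
        rw [h0, Finset.card_range] at hle
        omega
      rw [hemp] at hk
      simp only [Finset.card_empty, Nat.cast_zero] at hk
      have hpos : (0:ℝ) < (N:ℝ) * t * Real.exp (-c₁ * (k:ℕ)) := by positivity
      linarith
    exact Set.mem_biUnion (Finset.mem_Icc.2 ⟨by omega, hkn⟩) hk
  have hcore : ∀ k ∈ Finset.Icc (max M 1) n, ℙ (A k) ≤ ENNReal.ofReal (β⁻¹ * ρ ^ k) := by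
    intro k hkmem
    rw [Finset.mem_Icc] at hkmem
    obtain ⟨k', rfl⟩ : ∃ k', k = k' + 1 := ⟨k - 1, by omega⟩
    set ε : ℝ≥0∞ := ENNReal.ofReal ((N:ℝ) * t * Real.exp (-c₁ * ((k' + 1 : ℕ) : ℝ))) with hε
    have hεpos : 0 < (N:ℝ) * t * Real.exp (-c₁ * ((k' + 1 : ℕ) : ℝ)) := by positivity
    have hAeq : A (k' + 1) = {ω | ε ≤ ((Rk (k' + 1) n ω).card : ℝ≥0∞)} := by
      ext ω
      simp only [hA, Set.mem_setOf_eq, hε]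
      rw [← ENNReal.ofReal_natCast ((Rk (k' + 1) n ω).card),
        ENNReal.ofReal_le_ofReal_iff (Nat.cast_nonneg _)]
    -- measurability of the cardinality function
    have hnn : n - 1 + 1 = n := by omega
    have hTmeas : Measurable (fun ω (m : Fin n) => Y (m : ℕ) ω) :=
      measurable_pi_lambda _ (fun m => hYmeas (m : ℕ))
    have hfac : ∀ ω, Rk (k' + 1) n ω =
        ((Finset.univ.image (fun m : Fin n => Y (m : ℕ) ω)).filter
          (fun x => (Finset.univ.filter (fun m : Fin n => Y (m : ℕ) ω = x)).card = k' + 1)) := by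
      intro ω
      rw [hRk]
      have himg : (Finset.range n).image (fun j => Y j ω)
          = Finset.univ.image (fun m : Fin n => Y (m : ℕ) ω) := by
        ext x
        simp only [Finset.mem_image, Finset.mem_range, Finset.mem_univ, true_and]
        constructor
        · rintro ⟨j, hj, he⟩; exact ⟨⟨j, hj⟩, he⟩
        · rintro ⟨m, he⟩; exact ⟨(m : ℕ), m.2, he⟩
      rw [himg]
      apply Finset.filter_congr
      intro x _
      rw [hL, hnn]
      have hcc : ((Finset.range n).filter (fun j => Y j ω = x)).card
          = (Finset.univ.filter (fun m : Fin n => Y (m : ℕ) ω = x)).card := by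
        rw [Finset.card_filter, Finset.card_filter]
        exact (Fin.sum_univ_eq_sum_range (fun j => if Y j ω = x then 1 else 0) n).symm
      rw [hcc]
    have hcmeas : Measurable (fun ω => ((Rk (k' + 1) n ω).card : ℝ≥0∞)) := by
      have heq : (fun ω => ((Rk (k' + 1) n ω).card : ℝ≥0∞)) =
          (fun v : Fin n → (Fin d → ℤ) =>
            (((Finset.univ.image v).filter
              (fun x => (Finset.univ.filter (fun m => v m = x)).card = k' + 1)).card : ℝ≥0∞))
            ∘ (fun ω (m : Fin n) => Y (m : ℕ) ω) := by
        funext ω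
        simp only [Function.comp_apply]
        rw [hfac ω]
      rw [heq]
      exact (measurable_of_countable _).comp hTmeas
    -- counting via chains
    set TS := (Finset.range n) ×ˢ Fintype.piFinset (fun _ : Fin k' => Finset.Icc 1 n) with hTS
    have hchainmeas : ∀ s : ℕ × (Fin k' → ℕ), MeasurableSet (chainC ξ s.1 (List.ofFn s.2)) :=
      fun s => (detOn_chainC ξ (List.ofFn s.2) s.1).measurableSet hξmeas
    have hpoint : ∀ ω, (Rk (k' + 1) n ω).card ≤
        (TS.filter (fun s => ω ∈ chainC ξ s.1 (List.ofFn s.2))).card := by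
      intro ω
      set Sx : (Fin d → ℤ) → Finset ℕ := fun x => (Finset.range n).filter (fun j => Y j ω = x)
        with hSxdef
      set u : (Fin d → ℤ) → ℕ → ℕ := fun x i => ((Sx x).sort (· ≤ ·)).getD i 0 with hu
      have hlen : ∀ x ∈ Rk (k' + 1) n ω, ((Sx x).sort (· ≤ ·)).length = k' + 1 := by
        intro x hx
        rw [Finset.length_sort]
        exact hRkcard _ ω x hx
      have hgetd : ∀ x i (hi : i < ((Sx x).sort (· ≤ ·)).length),
          u x i = ((Sx x).sort (· ≤ ·)).get ⟨i, hi⟩ := by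
        intro x i hi
        rw [hu]
        exact List.getD_eq_getElem _ _ hi
      have hcmp : ∀ x i j (hi : i < ((Sx x).sort (· ≤ ·)).length)
          (hj : j < ((Sx x).sort (· ≤ ·)).length), i < j → u x i < u x j := by
        intro x i j hi hj hij
        rw [hgetd x i hi, hgetd x j hj]
        exact (Sx x).sortedLT_sort (Fin.mk_lt_mk.2 hij)
      have humem : ∀ x ∈ Rk (k' + 1) n ω, ∀ i, i ≤ k' → u x i ∈ Sx x := by
        intro x hx i hi
        have hil : i < ((Sx x).sort (· ≤ ·)).length := by rw [hlen x hx]; omega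
        rw [hgetd x i hil]
        rw [← Finset.mem_sort (α := ℕ) (· ≤ ·)]
        exact List.get_mem _ _
      have humono : ∀ x ∈ Rk (k' + 1) n ω, ∀ i j, i < j → j ≤ k' → u x i < u x j := by
        intro x hx i j hij hj
        have hjl : j < ((Sx x).sort (· ≤ ·)).length := by rw [hlen x hx]; omega
        exact hcmp x i j (by omega) hjl hij
      have hYu : ∀ x ∈ Rk (k' + 1) n ω, ∀ i, i ≤ k' → Y (u x i) ω = x := by
        intro x hx i hi
        exact (Finset.mem_filter.1 (humem x hx i hi)).2
      have hun : ∀ x ∈ Rk (k' + 1) n ω, ∀ i, i ≤ k' → u x i < n := by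
        intro x hx i hi
        exact Finset.mem_range.1 (Finset.mem_filter.1 (humem x hx i hi)).1
      have hbetween : ∀ x ∈ Rk (k' + 1) n ω, ∀ i, i < k' →
          ∀ m, u x i < m → m < u x (i + 1) → m ∉ Sx x := by
        intro x hx i hik m h1 h2 hm
        rw [← Finset.mem_sort (α := ℕ) (· ≤ ·)] at hm
        obtain ⟨a, ha, hma⟩ := List.getElem_of_mem hm
        have hil : i < ((Sx x).sort (· ≤ ·)).length := by rw [hlen x hx]; omega
        have hil1 : i + 1 < ((Sx x).sort (· ≤ ·)).length := by rw [hlen x hx]; omega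
        have hua : u x a = m := by
          rw [hgetd x a ha]
          simpa using hma
        rcases Nat.lt_trichotomy a i with hlt | heq | hgt
        · have := hcmp x a i ha hil hlt
          omega
        · subst heq; omega
        · rcases Nat.lt_trichotomy a (i + 1) with hlt' | heq' | hgt'
          · omega
          · subst heq'; omega
          · have := hcmp x (i + 1) a hil1 ha hgt'
            omega
      set φ : (Fin d → ℤ) → ℕ × (Fin k' → ℕ) :=
        fun x => (u x 0, fun i => u x ((i : ℕ) + 1) - u x (i : ℕ)) with hφ
      have hgap : ∀ x ∈ Rk (k' + 1) n ω, ∀ i : ℕ, i < k' →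
          u x (i + 1) = u x i + (u x (i + 1) - u x i) := by
        intro x hx i hi
        have := humono x hx i (i + 1) (by omega) (by omega)
        omega
      have hmaps : ∀ x ∈ Rk (k' + 1) n ω,
          φ x ∈ TS.filter (fun s => ω ∈ chainC ξ s.1 (List.ofFn s.2)) := by
        intro x hx
        rw [Finset.mem_filter]
        constructor
        · rw [hTS, Finset.mem_product]
          constructor
          · exact Finset.mem_range.2 (hun x hx 0 (by omega))
          · rw [Fintype.mem_piFinset]
            intro i
            rw [Finset.mem_Icc]
            simp only [hφ]
            have hik : (i : ℕ) < k' := i.isLt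
            have h1 := humono x hx (i : ℕ) ((i : ℕ) + 1) (by omega) (by omega)
            have h2 := hun x hx ((i : ℕ) + 1) (by omega)
            omega
        · -- chain membership
          have hchain := mem_chainC (ξ := ξ) (ω := ω) (List.ofFn (φ x).2) (u x) ?_ ?_
          · simpa using hchain
          · intro i hi
            rw [List.length_ofFn] at hi
            have hgd : (List.ofFn (φ x).2).getD i 0 = u x (i + 1) - u x i := by
              rw [List.getD_eq_getElem _ _ (by rw [List.length_ofFn]; exact hi),
                List.getElem_ofFn]
            rw [hgd]
            exact hgap x hx i hi
          · intro i hi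
            rw [List.length_ofFn] at hi
            have hgd : (List.ofFn (φ x).2).getD i 0 = u x (i + 1) - u x i := by
              rw [List.getD_eq_getElem _ _ (by rw [List.length_ofFn]; exact hi),
                List.getElem_ofFn]
            rw [hgd, hblockY]
            constructor
            · rw [← hgap x hx i hi]
              rw [hYu x hx (i + 1) (by omega), hYu x hx i (by omega)]
            · intro l hl hla he
              have hm : u x i + l < u x (i + 1) := by omega
              have hmn : u x i + l < n := lt_trans hm (hun x hx (i + 1) (by omega))
              have hmem : u x i + l ∈ Sx x := by
                rw [hSxdef]
                refine Finset.mem_filter.2 ⟨Finset.mem_range.2 hmn, ?_⟩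
                rw [he, hYu x hx i (by omega)]
              exact hbetween x hx i hi (u x i + l) (by omega) hm hmem
      have hinj : Set.InjOn φ (Rk (k' + 1) n ω) := by
        intro x hx y hy he
        have h0 : u x 0 = u y 0 := congrArg Prod.fst he
        have hgapeq : ∀ i : Fin k', u x ((i : ℕ) + 1) - u x (i : ℕ)
            = u y ((i : ℕ) + 1) - u y (i : ℕ) := fun i =>
          congrFun (congrArg Prod.snd he) i
        have hall : ∀ i, i ≤ k' → u x i = u y i := by
          intro i
          induction i with
          | zero => intro _; exact h0
          | succ i ih =>
            intro hi
            have hik : i < k' := by omega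
            rw [hgap x hx i hik, hgap y hy i hik, ih (by omega)]
            have := hgapeq ⟨i, hik⟩
            simp only at this
            rw [ih (by omega)] at this
            rw [this]
        have ex : Y (u x 0) ω = x := hYu x hx 0 (by omega)
        have ey : Y (u y 0) ω = y := hYu y hy 0 (by omega)
        rw [← ex, ← ey, h0]
      exact Finset.card_le_card_of_injOn φ hmaps hinj
    -- integral bound
    have hlint : ∫⁻ ω, ((Rk (k' + 1) n ω).card : ℝ≥0∞) ∂ℙ
        ≤ ∑ s ∈ TS, ℙ (chainC ξ s.1 (List.ofFn s.2)) := by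
      have hptw : ∀ ω, ((Rk (k' + 1) n ω).card : ℝ≥0∞)
          ≤ ∑ s ∈ TS, (chainC ξ s.1 (List.ofFn s.2)).indicator (fun _ => (1 : ℝ≥0∞)) ω := by
        intro ω
        calc ((Rk (k' + 1) n ω).card : ℝ≥0∞)
            ≤ ((TS.filter (fun s => ω ∈ chainC ξ s.1 (List.ofFn s.2))).card : ℝ≥0∞) :=
              Nat.cast_le.2 (hpoint ω)
          _ = ∑ s ∈ TS, (chainC ξ s.1 (List.ofFn s.2)).indicator (fun _ => (1 : ℝ≥0∞)) ω := by
              rw [Finset.card_filter, Nat.cast_sum]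
              refine Finset.sum_congr rfl (fun s _ => ?_)
              by_cases h : ω ∈ chainC ξ s.1 (List.ofFn s.2) <;>
                simp [Set.indicator_apply, h]
      calc ∫⁻ ω, ((Rk (k' + 1) n ω).card : ℝ≥0∞) ∂ℙ
          ≤ ∫⁻ ω, ∑ s ∈ TS,
              (chainC ξ s.1 (List.ofFn s.2)).indicator (fun _ => (1 : ℝ≥0∞)) ω ∂ℙ :=
            lintegral_mono hptw
        _ = ∑ s ∈ TS, ∫⁻ ω,
              (chainC ξ s.1 (List.ofFn s.2)).indicator (fun _ => (1 : ℝ≥0∞)) ω ∂ℙ :=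
            lintegral_finset_sum _ (fun s _ => measurable_const.indicator (hchainmeas s))
        _ = ∑ s ∈ TS, ℙ (chainC ξ s.1 (List.ofFn s.2)) :=
            Finset.sum_congr rfl (fun s _ => lintegral_indicator_one (hchainmeas s))
    have hTSsum : ∑ s ∈ TS, ℙ (chainC ξ s.1 (List.ofFn s.2))
        ≤ ENNReal.ofReal ((N:ℝ) * t * β ^ k') := by
      have hprod : ∀ s : ℕ × (Fin k' → ℕ), ℙ (chainC ξ s.1 (List.ofFn s.2))
          = ∏ i : Fin k', ℙ (blockD ξ 0 (s.2 i)) := by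
        intro s
        rw [prob_chainC hξindep hξmeas hξlaw (List.ofFn s.2) s.1, List.map_ofFn,
          List.prod_ofFn]
        rfl
      calc ∑ s ∈ TS, ℙ (chainC ξ s.1 (List.ofFn s.2))
          = ∑ s ∈ TS, ∏ i : Fin k', ℙ (blockD ξ 0 (s.2 i)) :=
            Finset.sum_congr rfl (fun s _ => hprod s)
        _ = ∑ _j ∈ Finset.range n,
              ∑ g ∈ Fintype.piFinset (fun _ : Fin k' => Finset.Icc 1 n),
              ∏ i : Fin k', ℙ (blockD ξ 0 (g i)) := by
            rw [hTS, Finset.sum_product]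
        _ = (n : ℝ≥0∞) * ∏ _i : Fin k', ∑ a ∈ Finset.Icc 1 n, ℙ (blockD ξ 0 a) := by
            rw [Finset.sum_const, Finset.card_range, nsmul_eq_mul]
            congr 1
            exact (Finset.prod_univ_sum (fun _ : Fin k' => Finset.Icc 1 n)
              (fun _ a => ℙ (blockD ξ 0 a))).symm
        _ ≤ (n : ℝ≥0∞) * ∏ _i : Fin k', ENNReal.ofReal β := by
            exact mul_le_mul_right (Finset.prod_le_prod' (fun i _ => hfle n)) _
        _ = (n : ℝ≥0∞) * ENNReal.ofReal (β ^ k') := by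
            rw [Finset.prod_const, Finset.card_univ, Fintype.card_fin,
              ← ENNReal.ofReal_pow hβ0.le]
        _ ≤ ENNReal.ofReal ((N:ℝ) * t) * ENNReal.ofReal (β ^ k') := by
            apply mul_le_mul_left
            rw [← ENNReal.ofReal_natCast n]
            exact ENNReal.ofReal_le_ofReal hnle
        _ = ENNReal.ofReal ((N:ℝ) * t * β ^ k') := by
            rw [← ENNReal.ofReal_mul (by positivity)]
    -- Markov inequality
    have hmarkov := mul_meas_ge_le_lintegral₀ (μ := (ℙ : Measure Ω)) hcmeas.aemeasurable ε
    have hεne0 : ε ≠ 0 := by rw [hε]; exact (ENNReal.ofReal_pos.2 hεpos).ne'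
    have hεnetop : ε ≠ ∞ := by rw [hε]; exact ENNReal.ofReal_ne_top
    have hfinal : ℙ (A (k' + 1)) ≤ ENNReal.ofReal ((N:ℝ) * t * β ^ k') / ε := by
      rw [hAeq, ENNReal.le_div_iff_mul_le (Or.inl hεne0) (Or.inl hεnetop), mul_comm]
      exact le_trans hmarkov (hlint.trans hTSsum)
    refine hfinal.trans ?_
    rw [hε, ← ENNReal.ofReal_div_of_pos hεpos]
    apply ENNReal.ofReal_le_ofReal
    have hE : Real.exp (-c₁ * ((k' + 1 : ℕ) : ℝ))
        = (Real.exp (c₁ * ((k' + 1 : ℕ) : ℝ)))⁻¹ := by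
      rw [neg_mul, Real.exp_neg]
    have hpowE : ρ ^ (k' + 1) = Real.exp (c₁ * ((k' + 1 : ℕ) : ℝ)) * β ^ (k' + 1) := by
      rw [hρ, mul_pow, mul_comm c₁, Real.exp_nat_mul]
    rw [hE, hpowE]
    apply le_of_eq
    have hne1 : (N:ℝ) * t ≠ 0 := hNt0.ne'
    have hne2 : Real.exp (c₁ * ((k' + 1 : ℕ) : ℝ)) ≠ 0 := (Real.exp_pos _).ne'
    have hne3 : β ≠ 0 := hβ0.ne'
    have hne4 : (N:ℝ) ≠ 0 := left_ne_zero_of_mul hne1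
    rw [pow_succ]
    field_simp
  -- combine
  have hgeom : ∑ k ∈ Finset.Icc (max M 1) n, β⁻¹ * ρ ^ k
      ≤ β⁻¹ * (1 - ρ)⁻¹ * Real.exp (-(-Real.log ρ) * M) := by
    have hexp : Real.exp (-(-Real.log ρ) * M) = ρ ^ M := by
      rw [neg_neg, mul_comm, Real.exp_nat_mul, Real.exp_log hρ0]
    rw [hexp]
    have hsub2 : Finset.Icc (max M 1) n ⊆ Finset.Icc M (M + n) := by
      intro k hk; rw [Finset.mem_Icc] at hk ⊢; omega
    have h1 : ∑ k ∈ Finset.Icc (max M 1) n, β⁻¹ * ρ ^ k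
        ≤ ∑ k ∈ Finset.Icc M (M + n), β⁻¹ * ρ ^ k :=
      Finset.sum_le_sum_of_subset_of_nonneg hsub2 (fun k _ _ => by positivity)
    have h3 : ∑ k ∈ Finset.Icc M (M + n), ρ ^ k
        = ∑ i ∈ Finset.range (n + 1), ρ ^ (M + i) := by
      rw [← Finset.Ico_add_one_right_eq_Icc, Finset.sum_Ico_eq_sum_range]
      have he : M + n + 1 - M = n + 1 := by omega
      rw [he]
    have h5 : ∑ i ∈ Finset.range (n + 1), ρ ^ i ≤ (1 - ρ)⁻¹ := by
      have hs := Summable.sum_le_tsum (Finset.range (n + 1)) (fun i _ => by positivity)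
        (summable_geometric_of_lt_one hρ0.le hρ1)
      rwa [tsum_geometric_of_lt_one hρ0.le hρ1] at hs
    have h4 : ∑ k ∈ Finset.Icc M (M + n), ρ ^ k ≤ ρ ^ M * (1 - ρ)⁻¹ := by
      rw [h3]
      calc ∑ i ∈ Finset.range (n + 1), ρ ^ (M + i)
          = ρ ^ M * ∑ i ∈ Finset.range (n + 1), ρ ^ i := by
            rw [Finset.mul_sum]
            exact Finset.sum_congr rfl (fun i _ => pow_add ρ M i)
        _ ≤ ρ ^ M * (1 - ρ)⁻¹ := by
            apply mul_le_mul_of_nonneg_left h5 (by positivity)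
    calc ∑ k ∈ Finset.Icc (max M 1) n, β⁻¹ * ρ ^ k
        ≤ ∑ k ∈ Finset.Icc M (M + n), β⁻¹ * ρ ^ k := h1
      _ = β⁻¹ * ∑ k ∈ Finset.Icc M (M + n), ρ ^ k := by rw [Finset.mul_sum]
      _ ≤ β⁻¹ * (ρ ^ M * (1 - ρ)⁻¹) := by
          apply mul_le_mul_of_nonneg_left h4 (by positivity)
      _ = β⁻¹ * (1 - ρ)⁻¹ * ρ ^ M := by ring
  calc (ℙ {ω | ∃ k : ℕ, M ≤ k ∧
      (N : ℝ) * t * Real.exp (-c₁ * k) ≤ ((Rk k n ω).card : ℝ)}).toReal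
      ≤ (∑ k ∈ Finset.Icc (max M 1) n, ℙ (A k)).toReal := by
        apply ENNReal.toReal_mono
        · exact (ENNReal.sum_lt_top.2 (fun k _ => measure_lt_top _ _)).ne
        · exact (measure_mono hsub).trans (measure_biUnion_finset_le _ _)
    _ ≤ β⁻¹ * (1 - ρ)⁻¹ * Real.exp (-(-Real.log ρ) * M) := by
        apply ENNReal.toReal_le_of_le_ofReal
        · exact le_of_lt (mul_pos (mul_pos (inv_pos.2 hβ0) (inv_pos.2 (by linarith)))
            (Real.exp_pos _))
        calc ∑ k ∈ Finset.Icc (max M 1) n, ℙ (A k)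
            ≤ ∑ k ∈ Finset.Icc (max M 1) n, ENNReal.ofReal (β⁻¹ * ρ ^ k) :=
              Finset.sum_le_sum hcore
          _ = ENNReal.ofReal (∑ k ∈ Finset.Icc (max M 1) n, β⁻¹ * ρ ^ k) :=
              (ENNReal.ofReal_sum_of_nonneg (fun k _ => by positivity)).symm
          _ ≤ _ := ENNReal.ofReal_le_ofReal hgeom
end
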